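/- arXiv:1705.10499 — 7 statements merged into one kernel-verified Lean document; each statement's English description precedes it below -/
import Mathlib

section
/- (AdaGrad regret bound.) Let f_1, …, f_T : ℝ^d → ℝ be convex differentiable functions. Let x_1 ∈ K, and for t = 1, …, T set g_t := ∇f_t(x_t), η_t := D / √(2 Σ_{τ=1}^t ‖g_τ‖²), and x_{t+1} := Π_K(x_t − η_t g_t). Assume g_1 ≠ 0 (so all learning rates are well defined). Then for every x ∈ K: Σ_{t=1}^T f_t(x_t) − Σ_{t=1}^T f_t(x) ≤ √(2 D² Σ_{t=1}^T ‖g_t‖²). -/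
open RealInnerProductSpace

/-- Projection onto a convex set is distance-decreasing toward points of the set. -/
lemma proj_nonexp {E : Type*} [NormedAddCommGroup E] [InnerProductSpace ℝ E]
    {K : Set E} (hK : Convex ℝ K) {p y z : E} (hp : p ∈ K) (hz : z ∈ K)
    (hmin : ∀ w ∈ K, ‖p - y‖ ≤ ‖w - y‖) : ‖p - z‖ ≤ ‖y - z‖ := by
  have hinf : ‖y - p‖ = ⨅ w : K, ‖y - w‖ := by
    have : Nonempty K := ⟨⟨p, hp⟩⟩
    apply le_antisymm
    · exact le_ciInf fun w => by
        rw [norm_sub_rev, show ‖y - (w : E)‖ = ‖(w : E) - y‖ from norm_sub_rev _ _]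
        exact hmin w w.2
    · have hbdd : BddBelow (Set.range fun w : K => ‖y - (w : E)‖) := by
        refine ⟨0, ?_⟩
        rintro r ⟨w, rfl⟩
        exact norm_nonneg _
      exact ciInf_le hbdd ⟨p, hp⟩
  have hvar := (norm_eq_iInf_iff_real_inner_le_zero hK hp).mp hinf
  have h1 := hvar z hz
  have hsq : ‖p - z‖ ^ 2 ≤ ‖y - z‖ ^ 2 := by
    have e : y - z = (y - p) - (z - p) := by abel
    have e2 : ‖p - z‖ = ‖z - p‖ := norm_sub_rev _ _
    have expand := norm_sub_sq_real (y - p) (z - p)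
    rw [e, expand, e2]
    nlinarith [sq_nonneg ‖y - p‖]
  nlinarith [norm_nonneg (p - z), norm_nonneg (y - z)]

lemma sqrt_step (u v : ℝ) (hu : 0 ≤ u) (huv : u ≤ v) (hv : 0 < v) :
    (v - u) / Real.sqrt (2 * v) ≤ Real.sqrt (2 * v) - Real.sqrt (2 * u) := by
  have hsv : 0 < Real.sqrt (2 * v) := Real.sqrt_pos.mpr (by linarith)
  rw [div_le_iff₀ hsv]
  have h1 : Real.sqrt (2 * u) ^ 2 = 2 * u := Real.sq_sqrt (by linarith)
  have h2 : Real.sqrt (2 * v) ^ 2 = 2 * v := Real.sq_sqrt (by linarith)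
  have h4 : 0 ≤ Real.sqrt (2 * u) := Real.sqrt_nonneg _
  nlinarith [sq_nonneg (Real.sqrt (2 * v) - Real.sqrt (2 * u))]

lemma abel_bound (a b : ℕ → ℝ) (C : ℝ) :
    ∀ n, 1 ≤ n → (∀ t, 0 ≤ b t) → (∀ t, b t ≤ b (t + 1)) →
      (∀ t, 0 ≤ a t) → (∀ t, 1 ≤ t → t ≤ n + 1 → a t ≤ C) →
      ∑ t ∈ Finset.Icc 1 n, b t * (a t - a (t + 1)) ≤ b n * C - b n * a (n + 1) := by
  intro n hn
  induction n, hn using Nat.le_induction with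
  | base =>
    intro hb0 _ ha0 haC
    rw [Finset.Icc_self, Finset.sum_singleton]
    nlinarith [mul_le_mul_of_nonneg_left (haC 1 le_rfl (by omega)) (hb0 1)]
  | succ n hn ih =>
    intro hb0 hbmono ha0 haC
    rw [Finset.sum_Icc_succ_top (by omega : 1 ≤ n + 1)]
    have h1 := ih hb0 hbmono ha0 (fun t h1 h2 => haC t h1 (by omega))
    have h2 : (b (n + 1) - b n) * a (n + 1) ≤ (b (n + 1) - b n) * C :=
      mul_le_mul_of_nonneg_left (haC (n + 1) (by omega) (by omega))
        (sub_nonneg.mpr (hbmono n))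
    nlinarith [h1, h2]


set_option maxHeartbeats 1000000 in
theorem adagrad_regret
    {d : ℕ} (T : ℕ) (hT : 1 ≤ T)
    (K : Set (EuclideanSpace ℝ (Fin d)))
    (hKne : K.Nonempty) (hKcl : IsClosed K) (hKbdd : Bornology.IsBounded K)
    (hKconv : Convex ℝ K)
    (proj : EuclideanSpace ℝ (Fin d) → EuclideanSpace ℝ (Fin d))
    (hproj_mem : ∀ y, proj y ∈ K)
    (hproj_min : ∀ y, ∀ z ∈ K, ‖proj y - y‖ ≤ ‖z - y‖)
    (D : ℝ) (hD : D = Metric.diam K)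
    (f : ℕ → EuclideanSpace ℝ (Fin d) → ℝ)
    (hdiff : ∀ t, Differentiable ℝ (f t))
    (hconv : ∀ t x y, f t x + (inner ℝ (gradient (f t) x) (y - x) : ℝ) ≤ f t y)
    (x : ℕ → EuclideanSpace ℝ (Fin d)) (g : ℕ → EuclideanSpace ℝ (Fin d)) (η : ℕ → ℝ)
    (hx1 : x 1 ∈ K)
    (hg : ∀ t, g t = gradient (f t) (x t))
    (hg1 : g 1 ≠ 0)
    (hη : ∀ t, η t = D / Real.sqrt (2 * ∑ τ ∈ Finset.Icc 1 t, ‖g τ‖ ^ 2))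
    (hupd : ∀ t ∈ Finset.Icc 1 T, x (t + 1) = proj (x t - η t • g t)) :
    ∀ xs ∈ K,
      ∑ t ∈ Finset.Icc 1 T, f t (x t) - ∑ t ∈ Finset.Icc 1 T, f t xs ≤
        Real.sqrt (2 * D ^ 2 * ∑ t ∈ Finset.Icc 1 T, ‖g t‖ ^ 2) := by
  intro xs hxs
  have hxK : ∀ t, 1 ≤ t → t ≤ T + 1 → x t ∈ K := by
    intro t h1 h2
    match t, h1 with
    | 1, _ => exact hx1
    | (s + 2), _ =>
      rw [hupd (s + 1) (Finset.mem_Icc.mpr ⟨by omega, by omega⟩)]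
      exact hproj_mem _
  have hDnn : 0 ≤ D := hD ▸ Metric.diam_nonneg
  set S : ℕ → ℝ := fun t => ∑ τ ∈ Finset.Icc 1 t, ‖g τ‖ ^ 2 with hSdef
  set a : ℕ → ℝ := fun t => ‖x t - xs‖ ^ 2 with hadef
  have ha0 : ∀ t, 0 ≤ a t := fun t => sq_nonneg _
  have haD : ∀ t, 1 ≤ t → t ≤ T + 1 → a t ≤ D ^ 2 := by
    intro t h1 h2
    have hdist : dist (x t) xs ≤ D := hD ▸ Metric.dist_le_diam_of_mem hKbdd (hxK t h1 h2) hxs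
    rw [dist_eq_norm] at hdist
    have hn := norm_nonneg (x t - xs)
    simp only [hadef]
    nlinarith
  rcases eq_or_lt_of_le hDnn with hD0 | hDpos
  · -- degenerate case D = 0
    have hxeq : ∀ t ∈ Finset.Icc 1 T, f t (x t) = f t xs := by
      intro t ht
      rw [Finset.mem_Icc] at ht
      have h := haD t ht.1 (by omega)
      simp only [hadef] at h
      rw [← hD0] at h
      have h0 : ‖x t - xs‖ = 0 := by nlinarith [norm_nonneg (x t - xs)]
      rw [show x t = xs from by rwa [norm_sub_eq_zero_iff] at h0]
    rw [Finset.sum_congr rfl hxeq, sub_self]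
    exact Real.sqrt_nonneg _
  -- main case D > 0
  have hDne : D ≠ 0 := ne_of_gt hDpos
  have hSnonneg : ∀ t, 0 ≤ S t := fun t => Finset.sum_nonneg fun i _ => sq_nonneg _
  have hSpos : ∀ t, 1 ≤ t → 0 < S t := by
    intro t ht
    have h1 : ‖g 1‖ ^ 2 ≤ S t :=
      Finset.single_le_sum (f := fun τ => ‖g τ‖ ^ 2) (fun i _ => sq_nonneg _)
        (Finset.mem_Icc.mpr ⟨le_rfl, ht⟩)
    have h2 : 0 < ‖g 1‖ ^ 2 := pow_pos (norm_pos_iff.mpr hg1) 2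
    linarith
  have hSsucc : ∀ t : ℕ, S (t + 1) = S t + ‖g (t + 1)‖ ^ 2 := by
    intro t
    exact Finset.sum_Icc_succ_top (by omega) _
  have hS0 : S 0 = 0 := by
    simp only [hSdef]
    rw [Finset.Icc_eq_empty (by omega : ¬(1:ℕ) ≤ 0), Finset.sum_empty]
  have hSmono : ∀ t, S t ≤ S (t + 1) := by
    intro t; rw [hSsucc t]; nlinarith [sq_nonneg ‖g (t + 1)‖]
  set b : ℕ → ℝ := fun t => Real.sqrt (2 * S t) / (2 * D) with hbdef
  have hb0 : ∀ t, 0 ≤ b t := fun t => div_nonneg (Real.sqrt_nonneg _) (by linarith)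
  have hbmono : ∀ t, b t ≤ b (t + 1) := by
    intro t
    have h := Real.sqrt_le_sqrt (by linarith [hSmono t] : 2 * S t ≤ 2 * S (t + 1))
    simp only [hbdef]
    exact div_le_div_of_nonneg_right h (by linarith)
  -- telescoping sqrt sum
  have hsum : ∀ n : ℕ, ∑ t ∈ Finset.Icc 1 n, ‖g t‖ ^ 2 / Real.sqrt (2 * S t)
      ≤ Real.sqrt (2 * S n) := by
    intro n
    induction n with
    | zero =>
      rw [Finset.Icc_eq_empty (by omega : ¬(1:ℕ) ≤ 0), Finset.sum_empty]
      exact Real.sqrt_nonneg _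
    | succ n ih =>
      rw [Finset.sum_Icc_succ_top (by omega : 1 ≤ n + 1)]
      have e : ‖g (n + 1)‖ ^ 2 = S (n + 1) - S n := by rw [hSsucc n]; ring
      have hstep := sqrt_step (S n) (S (n + 1)) (hSnonneg n) (hSmono n) (hSpos (n + 1) (by omega))
      rw [e]
      linarith
  -- per-step inequality
  have keystep : ∀ t ∈ Finset.Icc 1 T,
      f t (x t) - f t xs ≤ b t * (a t - a (t + 1))
        + D / 2 * (‖g t‖ ^ 2 / Real.sqrt (2 * S t)) := by
    intro t htT
    rw [Finset.mem_Icc] at htT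
    have hs : 0 < Real.sqrt (2 * S t) := Real.sqrt_pos.mpr (by linarith [hSpos t htT.1])
    have hη' : η t = D / Real.sqrt (2 * S t) := hη t
    have hηpos : 0 < η t := by rw [hη']; exact div_pos hDpos hs
    have hgrad : f t (x t) - f t xs ≤ ⟪g t, x t - xs⟫ := by
      have h := hconv t (x t) xs
      rw [← hg t] at h
      have e : (inner ℝ (g t) (xs - x t) : ℝ) = -(inner ℝ (g t) (x t - xs) : ℝ) := by
        rw [← inner_neg_right]; congr 1; abel
      rw [e] at h; linarith
    have hupd' : x (t + 1) = proj (x t - η t • g t) := hupd t (Finset.mem_Icc.mpr htT)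
    have hne : ‖x (t + 1) - xs‖ ≤ ‖(x t - η t • g t) - xs‖ := by
      rw [hupd']
      exact proj_nonexp hKconv (hproj_mem _) hxs (fun w hw => hproj_min _ w hw)
    have hexp : ‖(x t - η t • g t) - xs‖ ^ 2
        = a t - 2 * η t * ⟪g t, x t - xs⟫ + η t ^ 2 * ‖g t‖ ^ 2 := by
      rw [sub_right_comm, norm_sub_sq_real, real_inner_smul_right, real_inner_comm,
        norm_smul, Real.norm_eq_abs]
      simp only [hadef]
      rw [mul_pow, sq_abs]
      ring
    have hsq : a (t + 1) ≤ a t - 2 * η t * ⟪g t, x t - xs⟫ + η t ^ 2 * ‖g t‖ ^ 2 := by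
      rw [← hexp]
      simp only [hadef]
      have h1 := norm_nonneg (x (t + 1) - xs)
      have h2 := norm_nonneg ((x t - η t • g t) - xs)
      nlinarith [hne]
    have h2η : 0 < 2 * η t := by linarith
    have hkey : ⟪g t, x t - xs⟫ ≤ (a t - a (t + 1)) / (2 * η t) + η t * ‖g t‖ ^ 2 / 2 := by
      have h3 : ⟪g t, x t - xs⟫ - η t * ‖g t‖ ^ 2 / 2 ≤ (a t - a (t + 1)) / (2 * η t) := by
        rw [le_div_iff₀ h2η]
        nlinarith [hsq]
      linarith
    have e1 : (a t - a (t + 1)) / (2 * η t) = b t * (a t - a (t + 1)) := by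
      simp only [hbdef]
      rw [hη']
      field_simp
    have e2 : η t * ‖g t‖ ^ 2 / 2 = D / 2 * (‖g t‖ ^ 2 / Real.sqrt (2 * S t)) := by
      rw [hη']
      ring
    rw [e1, e2] at hkey
    linarith
  have habel := abel_bound a b (D ^ 2) T hT hb0 hbmono ha0 haD
  have hsumT := hsum T
  calc ∑ t ∈ Finset.Icc 1 T, f t (x t) - ∑ t ∈ Finset.Icc 1 T, f t xs
      = ∑ t ∈ Finset.Icc 1 T, (f t (x t) - f t xs) := (Finset.sum_sub_distrib _ _).symm
    _ ≤ ∑ t ∈ Finset.Icc 1 T, (b t * (a t - a (t + 1))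
          + D / 2 * (‖g t‖ ^ 2 / Real.sqrt (2 * S t))) := Finset.sum_le_sum keystep
    _ = (∑ t ∈ Finset.Icc 1 T, b t * (a t - a (t + 1)))
          + D / 2 * ∑ t ∈ Finset.Icc 1 T, ‖g t‖ ^ 2 / Real.sqrt (2 * S t) := by
        rw [Finset.sum_add_distrib, Finset.mul_sum]
    _ ≤ (b T * D ^ 2 - b T * a (T + 1)) + D / 2 * Real.sqrt (2 * S T) := by
        have h := mul_le_mul_of_nonneg_left hsumT (by linarith : (0:ℝ) ≤ D / 2)
        linarith [habel]
    _ ≤ b T * D ^ 2 + D / 2 * Real.sqrt (2 * S T) := by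
        nlinarith [hb0 T, ha0 (T + 1)]
    _ = Real.sqrt (2 * D ^ 2 * S T) := by
        rw [show 2 * D ^ 2 * S T = D ^ 2 * (2 * S T) from by ring,
          Real.sqrt_mul (sq_nonneg D), Real.sqrt_sq hDnn]
        simp only [hbdef]
        field_simp
        ring
end

section
/- (AdaNGD_1, general convex case.) Let f : ℝ^d → ℝ be convex and differentiable with ‖∇f(x)‖ ≤ G for all x ∈ K, and let x_1, …, x_T and x̄_T be the AdaNGD_k iterates and output with k = 1, with g_t := ∇f(x_t) ≠ 0 for all t = 1, …, T. Then f(x̄_T) − min_{x ∈ K} f(x) ≤ √(2 D² T) / (Σ_{t=1}^T 1/‖g_t‖) ≤ √2 · G D / √T. -/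
lemma adangd_sum_inv_sqrt (T : ℕ) :
    ∑ t ∈ Finset.Icc 1 T, (Real.sqrt t)⁻¹ ≤ 2 * Real.sqrt T := by
  induction T with
  | zero => simp
  | succ n ih =>
    rw [Finset.sum_Icc_succ_top (by omega)]
    have ha : (0:ℝ) ≤ Real.sqrt n := Real.sqrt_nonneg _
    have hb : (0:ℝ) < Real.sqrt ((n:ℝ)+1) := Real.sqrt_pos.mpr (by positivity)
    have hab : Real.sqrt (n:ℝ) ≤ Real.sqrt ((n:ℝ)+1) := Real.sqrt_le_sqrt (by linarith)
    have ha2 : Real.sqrt (n:ℝ) ^ 2 = (n:ℝ) := Real.sq_sqrt (by positivity)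
    have hb2 : Real.sqrt ((n:ℝ)+1) ^ 2 = (n:ℝ)+1 := Real.sq_sqrt (by positivity)
    have key : (Real.sqrt ((n:ℝ)+1))⁻¹ ≤ 2 * (Real.sqrt ((n:ℝ)+1) - Real.sqrt (n:ℝ)) := by
      rw [inv_eq_one_div, div_le_iff₀ hb]
      nlinarith
    push_cast
    linarith

lemma adangd_abel (D2 : ℝ) (φ b : ℕ → ℝ) :
    ∀ n, 1 ≤ n → (∀ t, 1 ≤ t → t ≤ n → φ t ≤ φ (t+1)) → (0 ≤ φ 1) →
    (∀ t, 1 ≤ t → t ≤ n+1 → 0 ≤ b t ∧ b t ≤ D2) →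
    ∑ t ∈ Finset.Icc 1 n, (b t - b (t+1)) * φ t ≤ D2 * φ n - b (n+1) * φ n := by
  intro n
  induction n with
  | zero => intro h; omega
  | succ m ih =>
    intro _ hmono hφ1 hb
    by_cases hm : 1 ≤ m
    · have ihm := ih hm (fun t ht htm => hmono t ht (by omega)) hφ1
        (fun t ht htm => hb t ht (by omega))
      rw [Finset.sum_Icc_succ_top (by omega)]
      have hφm : φ m ≤ φ (m+1) := hmono m hm (by omega)
      have hb1 := hb (m+1) (by omega) (by omega)
      have hb2 := hb (m+2) (by omega) (by omega)
      have hprod : b (m+1) * (φ (m+1) - φ m) ≤ D2 * (φ (m+1) - φ m) :=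
        mul_le_mul_of_nonneg_right hb1.2 (by linarith)
      nlinarith [ihm]
    · have hm0 : m = 0 := by omega
      subst hm0
      rw [show Finset.Icc 1 1 = {1} by rfl, Finset.sum_singleton]
      have h1 := hb 1 (by omega) (by omega)
      have h2 := hb 2 (by omega) (by omega)
      nlinarith [h1.2, h2.1, hφ1]

lemma adangd_contract {F : Type*} [NormedAddCommGroup F] [InnerProductSpace ℝ F]
    {K : Set F} (hKconv : Convex ℝ K) (proj : F → F)
    (hmem : ∀ y, proj y ∈ K) (hmin : ∀ y, ∀ z ∈ K, ‖proj y - y‖ ≤ ‖z - y‖) :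
    ∀ y, ∀ z ∈ K, ‖proj y - z‖ ≤ ‖y - z‖ := by
  intro y z hz
  have hinf : ‖y - proj y‖ = ⨅ w : K, ‖y - (w:F)‖ := by
    have hne : Nonempty K := ⟨⟨proj y, hmem y⟩⟩
    apply le_antisymm
    · apply le_ciInf
      intro w
      calc ‖y - proj y‖ = ‖proj y - y‖ := norm_sub_rev _ _
        _ ≤ ‖(w:F) - y‖ := hmin y w w.2
        _ = ‖y - (w:F)‖ := norm_sub_rev _ _
    · exact ciInf_le ⟨0, by rintro a ⟨w, rfl⟩; exact norm_nonneg _⟩ (⟨proj y, hmem y⟩ : K)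
  have hobt := (norm_eq_iInf_iff_real_inner_le_zero hKconv (hmem y)).mp hinf z hz
  have hpos : (0:ℝ) ≤ inner ℝ (y - proj y) (proj y - z) := by
    have heq : (inner ℝ (y - proj y) (proj y - z) : ℝ) = - (inner ℝ (y - proj y) (z - proj y) : ℝ) := by
      rw [← inner_neg_right]; congr 1; abel
    rw [heq]; linarith
  have hexp : ‖y - z‖^2 = ‖y - proj y‖^2 + 2 * (inner ℝ (y - proj y) (proj y - z) : ℝ) + ‖proj y - z‖^2 := by
    rw [show y - z = (y - proj y) + (proj y - z) by abel, norm_add_sq_real]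
  have hsq : ‖proj y - z‖^2 ≤ ‖y - z‖^2 := by nlinarith [sq_nonneg ‖y - proj y‖]
  have h1 := Real.sqrt_le_sqrt hsq
  rwa [Real.sqrt_sq (norm_nonneg _), Real.sqrt_sq (norm_nonneg _)] at h1

theorem adangd_one_general
    {d : ℕ} (T : ℕ) (hT : 1 ≤ T) (G : ℝ)
    (K : Set (EuclideanSpace ℝ (Fin d)))
    (hKne : K.Nonempty) (hKcl : IsClosed K) (hKbdd : Bornology.IsBounded K)
    (hKconv : Convex ℝ K)
    (proj : EuclideanSpace ℝ (Fin d) → EuclideanSpace ℝ (Fin d))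
    (hproj_mem : ∀ y, proj y ∈ K)
    (hproj_min : ∀ y, ∀ z ∈ K, ‖proj y - y‖ ≤ ‖z - y‖)
    (D : ℝ) (hD : D = Metric.diam K)
    (f : EuclideanSpace ℝ (Fin d) → ℝ)
    (hdiff : Differentiable ℝ f)
    (hconv : ∀ x y, f x + (inner ℝ (gradient f x) (y - x) : ℝ) ≤ f y)
    (hG : ∀ x ∈ K, ‖gradient f x‖ ≤ G)
    (x : ℕ → EuclideanSpace ℝ (Fin d)) (g : ℕ → EuclideanSpace ℝ (Fin d)) (η : ℕ → ℝ)
    (hx1 : x 1 ∈ K)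
    (hg : ∀ t, g t = gradient f (x t))
    (hgne : ∀ t ∈ Finset.Icc 1 T, g t ≠ 0)
    (hη : ∀ t, η t = D / Real.sqrt (2 * t))
    (hupd : ∀ t ∈ Finset.Icc 1 T, x (t + 1) = proj (x t - (η t / ‖g t‖) • g t))
    (xbar : EuclideanSpace ℝ (Fin d))
    (hxbar : xbar = ∑ t ∈ Finset.Icc 1 T, (((‖g t‖)⁻¹) / ∑ τ ∈ Finset.Icc 1 T, (‖g τ‖)⁻¹) • x t)
    :
    (∀ xs ∈ K,
      f xbar - f xs ≤
        Real.sqrt (2 * D ^ 2 * T) / ∑ t ∈ Finset.Icc 1 T, (‖g t‖)⁻¹) ∧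
    Real.sqrt (2 * D ^ 2 * T) / (∑ t ∈ Finset.Icc 1 T, (‖g t‖)⁻¹) ≤
      Real.sqrt 2 * G * D / Real.sqrt T := by
  set S := ∑ t ∈ Finset.Icc 1 T, (‖g t‖)⁻¹ with hSdef
  have hDnn : 0 ≤ D := hD ▸ Metric.diam_nonneg
  have hgpos : ∀ t ∈ Finset.Icc 1 T, (0:ℝ) < ‖g t‖ := fun t ht => norm_pos_iff.mpr (hgne t ht)
  have h1T : (1:ℕ) ∈ Finset.Icc 1 T := Finset.mem_Icc.mpr ⟨le_refl 1, hT⟩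
  have hSpos : 0 < S := Finset.sum_pos (fun t ht => inv_pos.mpr (hgpos t ht)) ⟨1, h1T⟩
  have hxK : ∀ t, 1 ≤ t → t ≤ T + 1 → x t ∈ K := by
    intro t
    induction t with
    | zero => intro h; omega
    | succ n ih =>
      intro h1 h2
      rcases Nat.lt_or_ge n 1 with hn | hn
      · have hn0 : n = 0 := by omega
        subst hn0; exact hx1
      · rw [hupd n (Finset.mem_Icc.mpr ⟨hn, by omega⟩)]
        exact hproj_mem _
  have hcontract := adangd_contract hKconv proj hproj_mem hproj_min
  have hTpos : (0:ℝ) < T := by exact_mod_cast Nat.lt_of_lt_of_le Nat.zero_lt_one hT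
  have hsqrt_eq : Real.sqrt (2 * D^2 * (T:ℝ)) = Real.sqrt 2 * D * Real.sqrt T := by
    rw [show 2*D^2*(T:ℝ) = 2*(D^2*(T:ℝ)) by ring, Real.sqrt_mul (by norm_num : (0:ℝ) ≤ 2),
      Real.sqrt_mul (sq_nonneg D), Real.sqrt_sq hDnn]
    ring
  have hkey : ∀ xs ∈ K, ∑ t ∈ Finset.Icc 1 T, (‖g t‖)⁻¹ * (inner ℝ (g t) (x t - xs) : ℝ)
      ≤ Real.sqrt (2 * D^2 * T) := by
    intro xs hxs
    rcases eq_or_lt_of_le hDnn with hD0 | hDpos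
    · -- D = 0 : K is a single point
      have hsing : ∀ a ∈ K, a = xs := by
        intro a ha
        have h := Metric.dist_le_diam_of_mem hKbdd ha hxs
        rw [← hD, ← hD0] at h
        exact eq_of_dist_eq_zero (le_antisymm h dist_nonneg)
      have hz : ∀ t ∈ Finset.Icc 1 T, (‖g t‖)⁻¹ * (inner ℝ (g t) (x t - xs):ℝ) = 0 := by
        intro t ht
        obtain ⟨h1, h2⟩ := Finset.mem_Icc.mp ht
        rw [hsing (x t) (hxK t h1 (by omega))]
        simp
      rw [Finset.sum_congr rfl hz]
      simp only [Finset.sum_const_zero]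
      positivity
    · -- D > 0
      set b : ℕ → ℝ := fun t => ‖x t - xs‖^2 with hbdef
      set φ : ℕ → ℝ := fun t => Real.sqrt (2*t) / (2*D) with hφdef
      have hstep : ∀ t ∈ Finset.Icc 1 T,
          (‖g t‖)⁻¹ * (inner ℝ (g t) (x t - xs):ℝ) ≤ (b t - b (t+1)) * φ t + η t / 2 := by
        intro t ht
        obtain ⟨ht1, ht2⟩ := Finset.mem_Icc.mp ht
        have hgp := hgpos t ht
        have htR : (0:ℝ) < t := by exact_mod_cast ht1
        have hst : (0:ℝ) < Real.sqrt (2*t) := Real.sqrt_pos.mpr (by positivity)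
        have hηpos : 0 < η t := by rw [hη t]; positivity
        have h1 : ‖x (t+1) - xs‖ ≤ ‖(x t - (η t / ‖g t‖) • g t) - xs‖ := by
          rw [hupd t ht]; exact hcontract _ xs hxs
        have hexp : ‖(x t - (η t / ‖g t‖) • g t) - xs‖^2
            = b t - 2 * (η t / ‖g t‖) * (inner ℝ (g t) (x t - xs):ℝ) + (η t)^2 := by
          rw [show (x t - (η t / ‖g t‖) • g t) - xs = (x t - xs) - (η t / ‖g t‖) • g t by abel,
            norm_sub_sq_real, real_inner_smul_right, norm_smul, mul_pow, Real.norm_eq_abs, sq_abs,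
            real_inner_comm (x t - xs) (g t)]
          have hg2 : (η t / ‖g t‖)^2 * ‖g t‖^2 = (η t)^2 := by
            field_simp
          simp only [hbdef]
          linarith [hg2]
        have h2 : b (t+1) ≤ b t - 2 * (η t / ‖g t‖) * (inner ℝ (g t) (x t - xs):ℝ) + (η t)^2 := by
          calc b (t+1) = ‖x (t+1) - xs‖^2 := rfl
            _ ≤ ‖(x t - (η t / ‖g t‖) • g t) - xs‖^2 := by
                apply pow_le_pow_left₀ (norm_nonneg _) h1
            _ = _ := hexp
        have he : 2 * (η t / ‖g t‖) * (inner ℝ (g t) (x t - xs):ℝ)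
            = 2 * η t * ((‖g t‖)⁻¹ * (inner ℝ (g t) (x t - xs):ℝ)) := by
          rw [div_eq_mul_inv]; ring
        have h3 : 2 * η t * ((‖g t‖)⁻¹ * (inner ℝ (g t) (x t - xs):ℝ))
            ≤ (b t - b (t+1)) + (η t)^2 := by linarith [h2, he]
        have hηφ : η t * φ t = 1/2 := by
          rw [hη t]
          simp only [hφdef]
          field_simp
        rw [← mul_le_mul_iff_right₀ (show (0:ℝ) < 2 * η t by positivity)]
        have expand : 2 * η t * ((b t - b (t+1)) * φ t + η t / 2)
            = (b t - b (t+1)) * (2 * (η t * φ t)) + (η t)^2 := by ring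
        rw [expand, hηφ]
        linarith [h3]
      have hsum1 := Finset.sum_le_sum hstep
      rw [Finset.sum_add_distrib] at hsum1
      have hφmono : ∀ t, 1 ≤ t → t ≤ T → φ t ≤ φ (t+1) := by
        intro t _ _
        have hmono : Real.sqrt (2*(t:ℝ)) ≤ Real.sqrt (2*((t:ℝ)+1)) :=
          Real.sqrt_le_sqrt (by linarith)
        have h2D : (0:ℝ) < 2*D := by linarith
        simp only [hφdef]
        push_cast
        rw [div_le_div_iff₀ (by linarith) (by linarith)]
        exact mul_le_mul_of_nonneg_right hmono (by linarith)
      have hbprop : ∀ t, 1 ≤ t → t ≤ T+1 → 0 ≤ b t ∧ b t ≤ D^2 := by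
        intro t h1 h2
        refine ⟨sq_nonneg _, ?_⟩
        have hm := hxK t h1 h2
        have hd : ‖x t - xs‖ ≤ D := by
          rw [hD, ← dist_eq_norm]
          exact Metric.dist_le_diam_of_mem hKbdd hm hxs
        simp only [hbdef]
        exact pow_le_pow_left₀ (norm_nonneg _) hd 2
      have hφ1nn : 0 ≤ φ 1 := by
        simp only [hφdef]
        exact div_nonneg (Real.sqrt_nonneg _) (by linarith)
      have habel := adangd_abel (D^2) φ b T hT hφmono hφ1nn hbprop
      have hφTnn : 0 ≤ φ T := by
        simp only [hφdef]
        exact div_nonneg (Real.sqrt_nonneg _) (by linarith)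
      have hbT := hbprop (T+1) (by omega) (by omega)
      have habel2 : ∑ t ∈ Finset.Icc 1 T, (b t - b (t+1)) * φ t ≤ D^2 * φ T := by
        nlinarith [habel, mul_nonneg hbT.1 hφTnn]
      have hηeq : ∀ t ∈ Finset.Icc 1 T, η t / 2 = (D / (2 * Real.sqrt 2)) * (Real.sqrt t)⁻¹ := by
        intro t ht
        obtain ⟨h1, _⟩ := Finset.mem_Icc.mp ht
        have htR : (0:ℝ) < t := by exact_mod_cast h1
        have hst : (0:ℝ) < Real.sqrt t := Real.sqrt_pos.mpr htR
        have hs2 : (0:ℝ) < Real.sqrt 2 := by positivity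
        rw [hη t, Real.sqrt_mul (by norm_num : (0:ℝ) ≤ 2)]
        ring
      have hηsum : ∑ t ∈ Finset.Icc 1 T, η t / 2
          ≤ (D / (2 * Real.sqrt 2)) * (2 * Real.sqrt T) := by
        rw [Finset.sum_congr rfl hηeq, ← Finset.mul_sum]
        exact mul_le_mul_of_nonneg_left (adangd_sum_inv_sqrt T) (by positivity)
      have hs2 : (0:ℝ) < Real.sqrt 2 := by positivity
      have hs2sq : Real.sqrt 2 * Real.sqrt 2 = 2 := Real.mul_self_sqrt (by norm_num)
      have h2T : Real.sqrt (2*(T:ℝ)) = Real.sqrt 2 * Real.sqrt T :=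
        Real.sqrt_mul (by norm_num) _
      have hfinal : D^2 * φ T + (D / (2 * Real.sqrt 2)) * (2 * Real.sqrt T)
          = Real.sqrt 2 * D * Real.sqrt T := by
        simp only [hφdef]
        rw [h2T]
        field_simp
        linear_combination (-1) * hs2sq
      calc ∑ t ∈ Finset.Icc 1 T, (‖g t‖)⁻¹ * (inner ℝ (g t) (x t - xs):ℝ)
          ≤ ∑ t ∈ Finset.Icc 1 T, (b t - b (t+1)) * φ t
            + ∑ t ∈ Finset.Icc 1 T, η t / 2 := hsum1
        _ ≤ D^2 * φ T + (D / (2 * Real.sqrt 2)) * (2 * Real.sqrt T) := by linarith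
        _ = Real.sqrt 2 * D * Real.sqrt T := hfinal
        _ = Real.sqrt (2 * D^2 * T) := hsqrt_eq.symm
  constructor
  · -- part 1
    intro xs hxs
    have hkey' := hkey xs hxs
    have hw : ∀ t ∈ Finset.Icc 1 T, (0:ℝ) ≤ (‖g t‖)⁻¹ :=
      fun t _ => inv_nonneg.mpr (norm_nonneg _)
    have hxbar' : S • xbar = ∑ t ∈ Finset.Icc 1 T, (‖g t‖)⁻¹ • x t := by
      rw [hxbar, Finset.smul_sum]
      apply Finset.sum_congr rfl
      intro t ht
      rw [smul_smul]
      congr 1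
      rw [mul_comm]
      exact div_mul_cancel₀ _ hSpos.ne'
    have hjensen : S * f xbar ≤ ∑ t ∈ Finset.Icc 1 T, (‖g t‖)⁻¹ * f (x t) := by
      have h1 : ∀ t ∈ Finset.Icc 1 T,
          (‖g t‖)⁻¹ * f xbar + (‖g t‖)⁻¹ * (inner ℝ (gradient f xbar) (x t - xbar):ℝ)
            ≤ (‖g t‖)⁻¹ * f (x t) := by
        intro t ht
        calc (‖g t‖)⁻¹ * f xbar + (‖g t‖)⁻¹ * (inner ℝ (gradient f xbar) (x t - xbar):ℝ)
            = (‖g t‖)⁻¹ * (f xbar + (inner ℝ (gradient f xbar) (x t - xbar):ℝ)) := by ring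
          _ ≤ (‖g t‖)⁻¹ * f (x t) :=
            mul_le_mul_of_nonneg_left (hconv xbar (x t)) (hw t ht)
      have h2 := Finset.sum_le_sum h1
      rw [Finset.sum_add_distrib] at h2
      have e1 : ∑ t ∈ Finset.Icc 1 T, (‖g t‖)⁻¹ * f xbar = S * f xbar := by
        rw [← Finset.sum_mul]
      have e2 : ∑ t ∈ Finset.Icc 1 T, (‖g t‖)⁻¹ * (inner ℝ (gradient f xbar) (x t - xbar):ℝ)
          = 0 := by
        have e3 : ∀ t ∈ Finset.Icc 1 T,
            (‖g t‖)⁻¹ * (inner ℝ (gradient f xbar) (x t - xbar):ℝ)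
              = (inner ℝ (gradient f xbar) ((‖g t‖)⁻¹ • (x t - xbar)) : ℝ) :=
          fun t _ => (real_inner_smul_right _ _ _).symm
        rw [Finset.sum_congr rfl e3, ← inner_sum]
        have e4 : ∑ t ∈ Finset.Icc 1 T, (‖g t‖)⁻¹ • (x t - xbar) = 0 := by
          have e5 : ∑ t ∈ Finset.Icc 1 T, (‖g t‖)⁻¹ • (x t - xbar)
              = (∑ t ∈ Finset.Icc 1 T, (‖g t‖)⁻¹ • x t) - S • xbar := by
            rw [Finset.sum_congr rfl (fun t _ => smul_sub ((‖g t‖)⁻¹) (x t) xbar),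
              Finset.sum_sub_distrib, ← Finset.sum_smul]
          rw [e5, hxbar']
          simp
        rw [e4, inner_zero_right]
      rw [e1, e2] at h2
      linarith
    have hlin : ∑ t ∈ Finset.Icc 1 T, (‖g t‖)⁻¹ * f (x t) - S * f xs
        ≤ ∑ t ∈ Finset.Icc 1 T, (‖g t‖)⁻¹ * (inner ℝ (g t) (x t - xs):ℝ) := by
      have h1 : ∀ t ∈ Finset.Icc 1 T,
          (‖g t‖)⁻¹ * f (x t) - (‖g t‖)⁻¹ * f xs
            ≤ (‖g t‖)⁻¹ * (inner ℝ (g t) (x t - xs):ℝ) := by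
        intro t ht
        have hc := hconv (x t) xs
        have hinner : (inner ℝ (g t) (x t - xs):ℝ)
            = - (inner ℝ (gradient f (x t)) (xs - x t):ℝ) := by
          rw [hg, ← inner_neg_right]
          congr 1
          abel
        have hc2 : f (x t) - f xs ≤ (inner ℝ (g t) (x t - xs):ℝ) := by
          rw [hinner]; linarith
        calc (‖g t‖)⁻¹ * f (x t) - (‖g t‖)⁻¹ * f xs
            = (‖g t‖)⁻¹ * (f (x t) - f xs) := by ring
          _ ≤ (‖g t‖)⁻¹ * (inner ℝ (g t) (x t - xs):ℝ) :=
            mul_le_mul_of_nonneg_left hc2 (hw t ht)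
      have h2 := Finset.sum_le_sum h1
      rw [Finset.sum_sub_distrib, ← Finset.sum_mul] at h2
      exact h2
    have hexp2 : S * (f xbar - f xs) = S * f xbar - S * f xs := by ring
    have hcomb : S * (f xbar - f xs) ≤ Real.sqrt (2 * D^2 * T) := by
      linarith [hjensen, hlin, hkey', hexp2]
    rw [le_div_iff₀ hSpos]
    have hexp3 : (f xbar - f xs) * S = S * (f xbar - f xs) := by ring
    linarith [hcomb, hexp3]
  · -- part 2
    have hG1 : 0 < G := by
      have := hgpos 1 h1T
      have h2 : ‖g 1‖ ≤ G := by rw [hg]; exact hG (x 1) hx1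
      linarith
    have hterm : ∀ t ∈ Finset.Icc 1 T, G⁻¹ ≤ (‖g t‖)⁻¹ := by
      intro t ht
      obtain ⟨h1, h2⟩ := Finset.mem_Icc.mp ht
      have hxt := hxK t h1 (by omega)
      have hgt : ‖g t‖ ≤ G := by rw [hg]; exact hG _ hxt
      exact inv_anti₀ (hgpos t ht) hgt
    have hcard : (Finset.Icc 1 T).card = T := by rw [Nat.card_Icc]; omega
    have hSge : (T:ℝ) * G⁻¹ ≤ S := by
      have h := Finset.card_nsmul_le_sum (Finset.Icc 1 T) (fun t => (‖g t‖)⁻¹) G⁻¹ hterm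
      rwa [hcard, nsmul_eq_mul] at h
    have hTG : (0:ℝ) < (T:ℝ) * G⁻¹ := by positivity
    have h1 : Real.sqrt (2 * D^2 * T) / S ≤ Real.sqrt (2 * D^2 * T) / ((T:ℝ) * G⁻¹) :=
      div_le_div_of_nonneg_left (Real.sqrt_nonneg _) hTG hSge
    have hsT : Real.sqrt T * Real.sqrt T = (T:ℝ) := Real.mul_self_sqrt hTpos.le
    have hsTpos : (0:ℝ) < Real.sqrt T := Real.sqrt_pos.mpr hTpos
    have h2 : Real.sqrt (2 * D^2 * T) / ((T:ℝ) * G⁻¹) = Real.sqrt 2 * G * D / Real.sqrt T := by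
      rw [hsqrt_eq]
      field_simp
      linear_combination D * hsT
    calc Real.sqrt (2 * D^2 * T) / S ≤ Real.sqrt (2 * D^2 * T) / ((T:ℝ) * G⁻¹) := h1
      _ = Real.sqrt 2 * G * D / Real.sqrt T := h2
end

section
/- (AdaNGD_1, smooth case.) Let f : ℝ^d → ℝ be convex, differentiable and β-smooth, and suppose the global minimizer x* := argmin_{x ∈ ℝ^d} f(x) exists and belongs to K. Let x_1, …, x_T and x̄_T be the AdaNGD_k iterates and output with k = 1, with g_t := ∇f(x_t) ≠ 0 for all t = 1, …, T. Then f(x̄_T) − min_{x ∈ K} f(x) ≤ D√(2T) / (Σ_{t=1}^T 1/‖g_t‖) ≤ 4 β D² / T. -/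
open Finset
set_option maxHeartbeats 2000000
open scoped RealInnerProductSpace

private lemma adangd_aux_sqrt_sum :
    ∀ N : ℕ, ∑ t ∈ Finset.Icc 1 N, (Real.sqrt (2 * t))⁻¹ ≤ Real.sqrt (2 * N) := by
  intro N
  induction N with
  | zero => simp
  | succ N ih =>
    rw [← Finset.insert_Icc_right_eq_Icc_add_one (by omega), Finset.sum_insert (by simp)]
    have hA : Real.sqrt (2 * (N : ℝ)) ^ 2 = 2 * N := Real.sq_sqrt (by positivity)
    have hAnn : (0:ℝ) ≤ Real.sqrt (2 * (N : ℝ)) := Real.sqrt_nonneg _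
    have hB : Real.sqrt (2 * ((N : ℝ) + 1)) ^ 2 = 2 * ((N : ℝ) + 1) :=
      Real.sq_sqrt (by positivity)
    have hBpos : (0:ℝ) < Real.sqrt (2 * ((N : ℝ) + 1)) :=
      Real.sqrt_pos.2 (by positivity)
    have hcast : ((N + 1 : ℕ) : ℝ) = (N : ℝ) + 1 := by push_cast; ring
    rw [hcast]
    set A := Real.sqrt (2 * (N : ℝ))
    set B := Real.sqrt (2 * ((N : ℝ) + 1))
    have key : B⁻¹ + A ≤ B := by
      have h1 : 1 + A * B ≤ B ^ 2 := by nlinarith [sq_nonneg (A - B)]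
      have h2 : (B⁻¹ + A) * B ≤ B * B := by
        rw [add_mul, inv_mul_cancel₀ hBpos.ne']
        nlinarith
      exact le_of_mul_le_mul_right h2 hBpos
    have hle : ∑ t ∈ Finset.Icc 1 N, (Real.sqrt (2 * (t:ℝ)))⁻¹ ≤ A := ih
    linarith

private lemma adangd_aux_tel (a b : ℕ → ℝ) (Dsq : ℝ)
    (hbmono : ∀ t, b t ≤ b (t + 1)) (hbnn : ∀ t, 0 ≤ b t) :
    ∀ N, 1 ≤ N → (∀ t, 1 ≤ t → t ≤ N → a t ≤ Dsq) →
      ∑ t ∈ Finset.Icc 1 N, b t * (a t - a (t + 1)) ≤ b N * (Dsq - a (N + 1)) := by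
  intro N hN
  induction N, hN using Nat.le_induction with
  | base =>
    intro ha
    simp only [Finset.Icc_self, Finset.sum_singleton]
    nlinarith [hbnn 1, ha 1 le_rfl le_rfl]
  | succ N hN ih =>
    intro ha
    rw [← Finset.insert_Icc_right_eq_Icc_add_one (by omega), Finset.sum_insert (by simp)]
    have h1 := ih (fun t ht htN => ha t ht (by omega))
    have h2 := hbmono N
    have h3 := ha (N + 1) (by omega) le_rfl
    nlinarith [mul_nonneg (sub_nonneg.2 h2) (sub_nonneg.2 h3)]

theorem adangd_one_smooth
    {d : ℕ} (T : ℕ) (hT : 1 ≤ T) (β : ℝ)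
    (K : Set (EuclideanSpace ℝ (Fin d)))
    (hKne : K.Nonempty) (hKcl : IsClosed K) (hKbdd : Bornology.IsBounded K)
    (hKconv : Convex ℝ K)
    (proj : EuclideanSpace ℝ (Fin d) → EuclideanSpace ℝ (Fin d))
    (hproj_mem : ∀ y, proj y ∈ K)
    (hproj_min : ∀ y, ∀ z ∈ K, ‖proj y - y‖ ≤ ‖z - y‖)
    (D : ℝ) (hD : D = Metric.diam K)
    (f : EuclideanSpace ℝ (Fin d) → ℝ)
    (hdiff : Differentiable ℝ f)
    (hconv : ∀ x y, f x + (inner ℝ (gradient f x) (y - x) : ℝ) ≤ f y)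
    (hsmooth : ∀ x y, f y ≤ f x + (inner ℝ (gradient f x) (y - x) : ℝ) + (β / 2) * ‖x - y‖ ^ 2)
    (xstar : EuclideanSpace ℝ (Fin d)) (hxstarK : xstar ∈ K)
    (hmin : ∀ y, f xstar ≤ f y)
    (x : ℕ → EuclideanSpace ℝ (Fin d)) (g : ℕ → EuclideanSpace ℝ (Fin d)) (η : ℕ → ℝ)
    (hx1 : x 1 ∈ K)
    (hg : ∀ t, g t = gradient f (x t))
    (hgne : ∀ t ∈ Finset.Icc 1 T, g t ≠ 0)
    (hη : ∀ t, η t = D / Real.sqrt (2 * t))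
    (hupd : ∀ t ∈ Finset.Icc 1 T, x (t + 1) = proj (x t - (η t / ‖g t‖) • g t))
    (xbar : EuclideanSpace ℝ (Fin d))
    (hxbar : xbar = ∑ t ∈ Finset.Icc 1 T, (((‖g t‖)⁻¹) / ∑ τ ∈ Finset.Icc 1 T, (‖g τ‖)⁻¹) • x t)
    :
    (∀ xs ∈ K,
      f xbar - f xs ≤
        D * Real.sqrt (2 * T) / ∑ t ∈ Finset.Icc 1 T, (‖g t‖)⁻¹) ∧
    D * Real.sqrt (2 * T) / (∑ t ∈ Finset.Icc 1 T, (‖g t‖)⁻¹) ≤ 4 * β * D ^ 2 / T := by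
  have hTpos : (0:ℝ) < T := by exact_mod_cast hT
  have h1I : 1 ∈ Finset.Icc 1 T := Finset.mem_Icc.2 ⟨le_rfl, hT⟩
  have hg1 : g 1 ≠ 0 := hgne 1 h1I
  -- β > 0
  have hβ : 0 < β := by
    by_contra hβ'
    push_neg at hβ'
    have hGn : 0 < ‖g 1‖ := norm_pos_iff.2 hg1
    set c := f (x 1) - f xstar with hc
    set s := (c + 1) / ‖g 1‖ ^ 2 with hs
    have h2 := hsmooth (x 1) (x 1 - s • g 1)
    have h3 : (inner ℝ (gradient f (x 1)) ((x 1 - s • g 1) - x 1) : ℝ) = -(s * ‖g 1‖ ^ 2) := by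
      rw [← hg 1]
      have hzz : (x 1 - s • g 1) - x 1 = -(s • g 1) := by abel
      rw [hzz, inner_neg_right, real_inner_smul_right, real_inner_self_eq_norm_sq]
    have h4 : ‖x 1 - (x 1 - s • g 1)‖ ^ 2 = s ^ 2 * ‖g 1‖ ^ 2 := by
      have hzz : x 1 - (x 1 - s • g 1) = s • g 1 := by abel
      rw [hzz, norm_smul, mul_pow, Real.norm_eq_abs, sq_abs]
    have h5 : s * ‖g 1‖ ^ 2 = c + 1 := by
      rw [hs]; field_simp
    rw [h3, h4] at h2
    have h6 := hmin (x 1 - s • g 1)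
    have h7 : β / 2 * (s ^ 2 * ‖g 1‖ ^ 2) ≤ 0 :=
      mul_nonpos_of_nonpos_of_nonneg (by linarith) (by positivity)
    rw [h5] at h2
    linarith
  -- key smoothness consequence
  have hkey : ∀ z, ‖gradient f z‖ ^ 2 ≤ 2 * β * (f z - f xstar) := by
    intro z
    set G := gradient f z with hG
    have h2 := hsmooth z (z - β⁻¹ • G)
    have h3 : (inner ℝ (gradient f z) ((z - β⁻¹ • G) - z) : ℝ) = -(β⁻¹ * ‖G‖ ^ 2) := by
      rw [← hG]
      have hzz : (z - β⁻¹ • G) - z = -(β⁻¹ • G) := by abel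
      rw [hzz, inner_neg_right, real_inner_smul_right, real_inner_self_eq_norm_sq]
    have h4 : ‖z - (z - β⁻¹ • G)‖ ^ 2 = β⁻¹ ^ 2 * ‖G‖ ^ 2 := by
      have hzz : z - (z - β⁻¹ • G) = β⁻¹ • G := by abel
      rw [hzz, norm_smul, mul_pow, Real.norm_eq_abs, sq_abs]
    rw [h3, h4] at h2
    have h6 := hmin (z - β⁻¹ • G)
    have hb2 : β⁻¹ * β = 1 := inv_mul_cancel₀ hβ.ne'
    have h9 : β / 2 * (β⁻¹ ^ 2 * ‖G‖ ^ 2) = β⁻¹ * ‖G‖ ^ 2 / 2 := by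
      field_simp
    have h8 : β⁻¹ * ‖G‖ ^ 2 / 2 ≤ f z - f xstar := by linarith
    nlinarith [mul_le_mul_of_nonneg_left h8 (by linarith : (0:ℝ) ≤ 2 * β)]
  -- D facts
  have hDnn : 0 ≤ D := hD ▸ Metric.diam_nonneg
  have hdist : ∀ p ∈ K, ∀ q ∈ K, ‖p - q‖ ≤ D := by
    intro p hp q hq
    rw [hD, ← dist_eq_norm]
    exact Metric.dist_le_diam_of_mem hKbdd hp hq
  have hDpos : 0 < D := by
    rcases hDnn.lt_or_eq with h | h
    · exact h
    exfalso
    have hx1s : x 1 = xstar := by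
      have h1 := hdist (x 1) hx1 xstar hxstarK
      rw [← h] at h1
      have h2 := le_antisymm h1 (norm_nonneg _)
      exact sub_eq_zero.1 (norm_eq_zero.1 h2)
    have hgs : gradient f xstar = 0 := by
      have h1 := hkey xstar
      have h2 : ‖gradient f xstar‖ ^ 2 ≤ 0 := by simpa using h1
      have h3 : ‖gradient f xstar‖ = 0 := by nlinarith [norm_nonneg (gradient f xstar)]
      exact norm_eq_zero.1 h3
    exact hg1 (by rw [hg 1, hx1s, hgs])
  -- projection inequality
  have hproj2 : ∀ y, ∀ u ∈ K, ‖proj y - u‖ ^ 2 ≤ ‖y - u‖ ^ 2 := by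
    intro y u hu
    set p := proj y with hp
    have hpK := hproj_mem y
    have hvar : ⟪y - p, u - p⟫ ≤ 0 := by
      by_contra hcon
      push_neg at hcon
      set c : ℝ := ⟪y - p, u - p⟫ with hcdef
      set M := ‖u - p‖ ^ 2 with hM
      have hMnn : 0 ≤ M := sq_nonneg _
      set θ := min 1 (c / (M + 1)) with hθ
      have hθpos : 0 < θ := lt_min one_pos (div_pos hcon (by linarith))
      have hθle : θ ≤ c / (M + 1) := min_le_right _ _
      have hθ1 : θ ≤ 1 := min_le_left _ _
      have hzK : (1 - θ) • p + θ • u ∈ K :=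
        hKconv hpK hu (by linarith) hθpos.le (by ring)
      have hmin2 := hproj_min y _ hzK
      have hrw : (1 - θ) • p + θ • u - y = (p - y) + θ • (u - p) := by module
      rw [hrw, ← hp] at hmin2
      have hsq : ‖p - y‖ ^ 2 ≤ ‖(p - y) + θ • (u - p)‖ ^ 2 :=
        pow_le_pow_left₀ (norm_nonneg _) hmin2 2
      rw [norm_add_sq_real] at hsq
      have hin : ⟪p - y, θ • (u - p)⟫ = θ * (-c) := by
        rw [real_inner_smul_right]
        congr 1
        rw [hcdef, ← inner_neg_left, neg_sub]
      have hns : ‖θ • (u - p)‖ ^ 2 = θ ^ 2 * M := by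
        rw [norm_smul, mul_pow, Real.norm_eq_abs, sq_abs, hM]
      rw [hin, hns] at hsq
      have h9 : 2 * c ≤ θ * M := by nlinarith
      have h10 : θ * M ≤ c / (M + 1) * M := mul_le_mul_of_nonneg_right hθle hMnn
      have h11 : c / (M + 1) * M < 2 * c := by
        rw [div_mul_eq_mul_div, div_lt_iff₀ (by linarith)]
        nlinarith
      linarith
    have hexp : ‖y - u‖ ^ 2 = ‖y - p‖ ^ 2 + 2 * ⟪y - p, p - u⟫ + ‖p - u‖ ^ 2 := by
      have hzz : y - u = (y - p) + (p - u) := by abel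
      rw [hzz, norm_add_sq_real]
    have hin2 : (0:ℝ) ≤ ⟪y - p, p - u⟫ := by
      have hzz : ⟪y - p, p - u⟫ = -⟪y - p, u - p⟫ := by
        rw [← inner_neg_right, neg_sub]
      rw [hzz]; linarith
    nlinarith [sq_nonneg ‖y - p‖]
  -- iterates stay in K
  have hxK : ∀ t, 1 ≤ t → t ≤ T + 1 → x t ∈ K := by
    intro t ht1
    induction t, ht1 using Nat.le_induction with
    | base => intro _; exact hx1
    | succ t ht ih =>
      intro htT
      rw [hupd t (Finset.mem_Icc.2 ⟨ht, by omega⟩)]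
      exact hproj_mem _
  have hsqpos : ∀ t : ℕ, 1 ≤ t → 0 < Real.sqrt (2 * t) := by
    intro t ht
    have : (1:ℝ) ≤ t := by exact_mod_cast ht
    exact Real.sqrt_pos.2 (by linarith)
  have hηpos : ∀ t : ℕ, 1 ≤ t → 0 < η t := by
    intro t ht
    rw [hη]
    exact div_pos hDpos (hsqpos t ht)
  -- the regret bound
  have hreg : ∀ u ∈ K, ∑ t ∈ Finset.Icc 1 T, ‖g t‖⁻¹ * ⟪g t, x t - u⟫ ≤
      D * Real.sqrt (2 * T) := by
    intro u hu
    set a : ℕ → ℝ := fun t => ‖x t - u‖ ^ 2 with ha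
    set b : ℕ → ℝ := fun t => Real.sqrt (2 * t) / (2 * D) with hb
    have hbmono : ∀ t, b t ≤ b (t + 1) := by
      intro t
      have h1 : Real.sqrt (2 * (t:ℝ)) ≤ Real.sqrt (2 * ((t:ℝ) + 1)) :=
        Real.sqrt_le_sqrt (by linarith)
      have h2 : ((t + 1 : ℕ) : ℝ) = (t:ℝ) + 1 := by push_cast; ring
      simp only [hb, h2]
      gcongr
    have hbnn : ∀ t, 0 ≤ b t := fun t => by
      simp only [hb]; positivity
    have hstep : ∀ t ∈ Finset.Icc 1 T,
        ‖g t‖⁻¹ * ⟪g t, x t - u⟫ ≤ b t * (a t - a (t + 1)) + η t / 2 := by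
      intro t htI
      obtain ⟨ht1, htT⟩ := Finset.mem_Icc.1 htI
      have hgt : g t ≠ 0 := hgne t htI
      have hgtn : 0 < ‖g t‖ := norm_pos_iff.2 hgt
      have hηt := hηpos t ht1
      have h1 : a (t + 1) ≤ ‖(x t - (η t / ‖g t‖) • g t) - u‖ ^ 2 := by
        simp only [ha]
        rw [hupd t htI]
        exact hproj2 _ u hu
      have hrw : (x t - (η t / ‖g t‖) • g t) - u = (x t - u) - η t • (‖g t‖⁻¹ • g t) := by
        rw [smul_smul, ← div_eq_mul_inv, sub_right_comm]
      rw [hrw] at h1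
      have hnorm1 : ‖(‖g t‖⁻¹ • g t)‖ = 1 := by
        rw [norm_smul, norm_inv, norm_norm, inv_mul_cancel₀ hgtn.ne']
      have hexp : ‖(x t - u) - η t • (‖g t‖⁻¹ • g t)‖ ^ 2 =
          a t - 2 * (η t * (‖g t‖⁻¹ * ⟪g t, x t - u⟫)) + η t ^ 2 := by
        rw [norm_sub_sq_real, real_inner_smul_right, norm_smul, mul_pow, Real.norm_eq_abs,
          sq_abs, hnorm1]
        have hcomm : ⟪x t - u, ‖g t‖⁻¹ • g t⟫ = ‖g t‖⁻¹ * ⟪g t, x t - u⟫ := by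
          rw [real_inner_comm, real_inner_smul_left]
        rw [hcomm]
        simp only [ha]
        ring
      rw [hexp] at h1
      have hbt : b t * (2 * η t) = 1 := by
        simp only [hb, hη]
        field_simp
      set cc := ‖g t‖⁻¹ * ⟪g t, x t - u⟫ with hcc
      have h5 : b t * (2 * η t * cc - η t ^ 2) ≤ b t * (a t - a (t + 1)) :=
        mul_le_mul_of_nonneg_left (by linarith) (hbnn t)
      have h6 : b t * (2 * η t * cc - η t ^ 2) = cc - η t / 2 := by
        rw [show b t * (2 * η t * cc - η t ^ 2) =
          (b t * (2 * η t)) * cc - (b t * (2 * η t)) * (η t / 2) from by ring, hbt]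
        ring
      linarith
    have hD2 : ∀ t, 1 ≤ t → t ≤ T → a t ≤ D ^ 2 := by
      intro t ht1 htT
      have hxtK : x t ∈ K := hxK t ht1 (by omega)
      have := hdist (x t) hxtK u hu
      simp only [ha]
      nlinarith [norm_nonneg (x t - u)]
    have htel := adangd_aux_tel a b (D ^ 2) hbmono hbnn T hT hD2
    have hηsum : ∑ t ∈ Finset.Icc 1 T, η t / 2 ≤ D * Real.sqrt (2 * T) / 2 := by
      have h1 : ∀ t ∈ Finset.Icc 1 T, η t / 2 = (D / 2) * (Real.sqrt (2 * t))⁻¹ := by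
        intro t ht
        rw [hη]
        ring
      rw [Finset.sum_congr rfl h1, ← Finset.mul_sum]
      have h2 := adangd_aux_sqrt_sum T
      have h3 : (0:ℝ) ≤ D / 2 := by linarith
      nlinarith [mul_le_mul_of_nonneg_left h2 h3]
    have hbT : b T * D ^ 2 = D * Real.sqrt (2 * T) / 2 := by
      simp only [hb]
      field_simp
    have haTnn : 0 ≤ a (T + 1) := by simp only [ha]; positivity
    calc ∑ t ∈ Finset.Icc 1 T, ‖g t‖⁻¹ * ⟪g t, x t - u⟫
        ≤ ∑ t ∈ Finset.Icc 1 T, (b t * (a t - a (t + 1)) + η t / 2) :=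
          Finset.sum_le_sum hstep
      _ = (∑ t ∈ Finset.Icc 1 T, b t * (a t - a (t + 1))) + ∑ t ∈ Finset.Icc 1 T, η t / 2 :=
          Finset.sum_add_distrib
      _ ≤ b T * (D ^ 2 - a (T + 1)) + D * Real.sqrt (2 * T) / 2 := by linarith
      _ ≤ b T * D ^ 2 + D * Real.sqrt (2 * T) / 2 := by nlinarith [hbnn T]
      _ = D * Real.sqrt (2 * T) := by rw [hbT]; ring
  -- common setup for both parts
  set S := ∑ t ∈ Finset.Icc 1 T, ‖g t‖⁻¹ with hS
  have hSpos : 0 < S :=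
    Finset.sum_pos (fun t ht => inv_pos.2 (norm_pos_iff.2 (hgne t ht))) ⟨1, h1I⟩
  have hlin : ∀ u ∈ K, ∀ t ∈ Finset.Icc 1 T, f (x t) - f u ≤ ⟪g t, x t - u⟫ := by
    intro u hu t ht
    have h5 := hconv (x t) u
    rw [← hg t] at h5
    have h6 : ⟪g t, u - x t⟫ = -⟪g t, x t - u⟫ := by
      rw [← inner_neg_right, neg_sub]
    rw [h6] at h5
    linarith
  constructor
  · -- Part 1
    intro xs hxs
    have hw1 : ∑ t ∈ Finset.Icc 1 T, ‖g t‖⁻¹ / S = 1 := by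
      rw [← Finset.sum_div]
      exact div_self hSpos.ne'
    have hzero : ∑ t ∈ Finset.Icc 1 T, (‖g t‖⁻¹ / S) • (x t - xbar) = 0 := by
      have h1 : ∑ t ∈ Finset.Icc 1 T, (‖g t‖⁻¹ / S) • (x t - xbar) =
          (∑ t ∈ Finset.Icc 1 T, (‖g t‖⁻¹ / S) • x t) -
          (∑ t ∈ Finset.Icc 1 T, ‖g t‖⁻¹ / S) • xbar := by
        rw [Finset.sum_smul, ← Finset.sum_sub_distrib]
        exact Finset.sum_congr rfl fun t _ => smul_sub _ _ _
      rw [h1, hw1, one_smul, ← hxbar, sub_self]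
    have hjensen : f xbar ≤ ∑ t ∈ Finset.Icc 1 T, (‖g t‖⁻¹ / S) * f (x t) := by
      have h1 : ∀ t ∈ Finset.Icc 1 T,
          (‖g t‖⁻¹ / S) * f xbar + (‖g t‖⁻¹ / S) * ⟪gradient f xbar, x t - xbar⟫ ≤
          (‖g t‖⁻¹ / S) * f (x t) := by
        intro t ht
        have hwnn : 0 ≤ ‖g t‖⁻¹ / S := by positivity
        have h2 := mul_le_mul_of_nonneg_left (hconv xbar (x t)) hwnn
        rw [mul_add] at h2
        exact h2
      have h2 := Finset.sum_le_sum h1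
      rw [Finset.sum_add_distrib] at h2
      have h3 : ∑ t ∈ Finset.Icc 1 T, (‖g t‖⁻¹ / S) * f xbar = f xbar := by
        rw [← Finset.sum_mul, hw1, one_mul]
      have h4 : ∑ t ∈ Finset.Icc 1 T, (‖g t‖⁻¹ / S) * ⟪gradient f xbar, x t - xbar⟫ = 0 := by
        have h5 : ∀ t ∈ Finset.Icc 1 T, (‖g t‖⁻¹ / S) * ⟪gradient f xbar, x t - xbar⟫ =
            ⟪gradient f xbar, (‖g t‖⁻¹ / S) • (x t - xbar)⟫ := by
          intro t _
          rw [real_inner_smul_right]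
        rw [Finset.sum_congr rfl h5, ← inner_sum, hzero, inner_zero_right]
      rw [h3, h4] at h2
      linarith
    have hmain : ∀ t ∈ Finset.Icc 1 T,
        (‖g t‖⁻¹ / S) * f (x t) - (‖g t‖⁻¹ / S) * f xs ≤
        S⁻¹ * (‖g t‖⁻¹ * ⟪g t, x t - xs⟫) := by
      intro t ht
      have hwnn : 0 ≤ ‖g t‖⁻¹ / S := by positivity
      have h7 := mul_le_mul_of_nonneg_left (hlin xs hxs t ht) hwnn
      have h8 : (‖g t‖⁻¹ / S) * ⟪g t, x t - xs⟫ = S⁻¹ * (‖g t‖⁻¹ * ⟪g t, x t - xs⟫) := by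
        rw [div_eq_mul_inv]; ring
      rw [h8, mul_sub] at h7
      linarith
    have hsum := Finset.sum_le_sum hmain
    rw [Finset.sum_sub_distrib, ← Finset.sum_mul, hw1, one_mul, ← Finset.mul_sum] at hsum
    have h9 := hreg xs hxs
    have h10 : S⁻¹ * (∑ t ∈ Finset.Icc 1 T, ‖g t‖⁻¹ * ⟪g t, x t - xs⟫) ≤
        S⁻¹ * (D * Real.sqrt (2 * T)) :=
      mul_le_mul_of_nonneg_left h9 (by positivity)
    have h11 : S⁻¹ * (D * Real.sqrt (2 * T)) = D * Real.sqrt (2 * T) / S := by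
      rw [div_eq_mul_inv]; ring
    linarith
  · -- Part 2
    have hGsum : ∑ t ∈ Finset.Icc 1 T, ‖g t‖ ≤ 2 * β * (D * Real.sqrt (2 * T)) := by
      have h1 : ∀ t ∈ Finset.Icc 1 T,
          ‖g t‖ ≤ 2 * β * (‖g t‖⁻¹ * ⟪g t, x t - xstar⟫) := by
        intro t ht
        have hgtn : 0 < ‖g t‖ := norm_pos_iff.2 (hgne t ht)
        have h2 : ‖g t‖ ^ 2 ≤ 2 * β * (f (x t) - f xstar) := by
          have := hkey (x t)
          rwa [← hg t] at this
        have h3 := hlin xstar hxstarK t ht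
        have h4 : 2 * β * (‖g t‖⁻¹ * ⟪g t, x t - xstar⟫) * ‖g t‖ =
            2 * β * ⟪g t, x t - xstar⟫ * (‖g t‖⁻¹ * ‖g t‖) := by ring
        rw [inv_mul_cancel₀ hgtn.ne', mul_one] at h4
        apply le_of_mul_le_mul_right _ hgtn
        rw [h4]
        nlinarith [mul_le_mul_of_nonneg_left h3 (by linarith : (0:ℝ) ≤ 2 * β)]
      calc ∑ t ∈ Finset.Icc 1 T, ‖g t‖
          ≤ ∑ t ∈ Finset.Icc 1 T, 2 * β * (‖g t‖⁻¹ * ⟪g t, x t - xstar⟫) :=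
            Finset.sum_le_sum h1
        _ = 2 * β * ∑ t ∈ Finset.Icc 1 T, ‖g t‖⁻¹ * ⟪g t, x t - xstar⟫ := by
            rw [← Finset.mul_sum]
        _ ≤ 2 * β * (D * Real.sqrt (2 * T)) :=
            mul_le_mul_of_nonneg_left (hreg xstar hxstarK) (by linarith)
    have hCS : (T:ℝ) ^ 2 ≤ (∑ t ∈ Finset.Icc 1 T, ‖g t‖) * S := by
      have h1 := Finset.sum_mul_sq_le_sq_mul_sq (Finset.Icc 1 T)
        (fun t => Real.sqrt ‖g t‖) (fun t => (Real.sqrt ‖g t‖)⁻¹)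
      have h2 : ∀ t ∈ Finset.Icc 1 T, Real.sqrt ‖g t‖ * (Real.sqrt ‖g t‖)⁻¹ = 1 := by
        intro t ht
        exact mul_inv_cancel₀ (Real.sqrt_pos.2 (norm_pos_iff.2 (hgne t ht))).ne'
      have h3 : ∀ t ∈ Finset.Icc 1 T, (Real.sqrt ‖g t‖) ^ 2 = ‖g t‖ :=
        fun t _ => Real.sq_sqrt (norm_nonneg _)
      have h4 : ∀ t ∈ Finset.Icc 1 T, ((Real.sqrt ‖g t‖)⁻¹) ^ 2 = ‖g t‖⁻¹ :=
        fun t _ => by rw [inv_pow, Real.sq_sqrt (norm_nonneg _)]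
      rw [Finset.sum_congr rfl h2, Finset.sum_congr rfl h3, Finset.sum_congr rfl h4] at h1
      simpa [Nat.card_Icc] using h1
    rw [div_le_div_iff₀ hSpos hTpos]
    have hsq2T : Real.sqrt (2 * (T:ℝ)) ^ 2 = 2 * T := Real.sq_sqrt (by positivity)
    have hsqnn : 0 ≤ Real.sqrt (2 * (T:ℝ)) := Real.sqrt_nonneg _
    have h5 : (T:ℝ) ^ 2 ≤ 2 * β * (D * Real.sqrt (2 * T)) * S :=
      le_trans hCS (mul_le_mul_of_nonneg_right hGsum hSpos.le)
    have h6 : D * Real.sqrt (2 * T) * (T:ℝ) ^ 2 ≤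
        D * Real.sqrt (2 * T) * (2 * β * (D * Real.sqrt (2 * T)) * S) :=
      mul_le_mul_of_nonneg_left h5 (by positivity)
    have h7 : D * Real.sqrt (2 * T) * (2 * β * (D * Real.sqrt (2 * T)) * S) =
        4 * β * D ^ 2 * S * T := by
      rw [show D * Real.sqrt (2 * (T:ℝ)) * (2 * β * (D * Real.sqrt (2 * (T:ℝ))) * S) =
        2 * β * D ^ 2 * S * (Real.sqrt (2 * (T:ℝ)) ^ 2) from by ring, hsq2T]
      ring
    rw [h7] at h6
    have h8 : (D * Real.sqrt (2 * T) * T) * T ≤ (4 * β * D ^ 2 * S) * T := by nlinarith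
    exact le_of_mul_le_mul_right h8 hTpos
end

section
/- (AdaNGD_2, general convex case.) Let f : ℝ^d → ℝ be convex and differentiable with ‖∇f(x)‖ ≤ G for all x ∈ K, and let x_1, …, x_T and x̄_T be the AdaNGD_k iterates and output with k = 2, with g_t := ∇f(x_t) ≠ 0 for all t = 1, …, T. Then f(x̄_T) − min_{x ∈ K} f(x) ≤ √(2 D²) / √(Σ_{t=1}^T 1/‖g_t‖²) ≤ √2 · G D / √T. -/
open scoped RealInnerProductSpace

open Finset in
lemma adangd_proj_contract {d : ℕ} {K : Set (EuclideanSpace ℝ (Fin d))}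
    (hKconv : Convex ℝ K)
    (proj : EuclideanSpace ℝ (Fin d) → EuclideanSpace ℝ (Fin d))
    (hproj_mem : ∀ y, proj y ∈ K)
    (hproj_min : ∀ y, ∀ z ∈ K, ‖proj y - y‖ ≤ ‖z - y‖)
    (u z : EuclideanSpace ℝ (Fin d)) (hz : z ∈ K) :
    ‖proj u - z‖ ≤ ‖u - z‖ := by
  haveI : Nonempty K := ⟨⟨z, hz⟩⟩
  have hinf : ‖u - proj u‖ = ⨅ w : K, ‖u - (w : EuclideanSpace ℝ (Fin d))‖ := by
    apply le_antisymm
    · apply le_ciInf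
      intro w
      rw [norm_sub_rev u (proj u), norm_sub_rev u w]
      exact hproj_min u w w.2
    · have hbdd : BddBelow (Set.range fun w : K => ‖u - (w : EuclideanSpace ℝ (Fin d))‖) :=
        ⟨0, by rintro y ⟨i, rfl⟩; exact norm_nonneg _⟩
      exact ciInf_le hbdd ⟨proj u, hproj_mem u⟩
  have hvar := (norm_eq_iInf_iff_real_inner_le_zero hKconv (hproj_mem u)).mp hinf z hz
  have hexp : ‖u - z‖ ^ 2 = ‖u - proj u‖ ^ 2 + 2 * (inner ℝ (u - proj u) (proj u - z) : ℝ) + ‖proj u - z‖ ^ 2 := by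
    have : u - z = (u - proj u) + (proj u - z) := by abel
    rw [this, @norm_add_sq_real]
  have h2 : (inner ℝ (u - proj u) (proj u - z) : ℝ) = -(inner ℝ (u - proj u) (z - proj u) : ℝ) := by
    rw [← inner_neg_right]; congr 1; abel
  nlinarith [norm_nonneg (u - proj u), norm_nonneg (proj u - z), norm_nonneg (u - z), sq_nonneg (‖u - proj u‖)]

lemma adangd_telescope (a b : ℕ → ℝ) (D2 : ℝ)
    (ha0 : ∀ t, 0 ≤ a t) (hb0 : ∀ t, 0 ≤ b t) (hbmono : ∀ t, b t ≤ b (t + 1)) :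
    ∀ n, 1 ≤ n → (∀ t, 1 ≤ t → t ≤ n + 1 → a t ≤ D2) →
      ∑ t ∈ Finset.Icc 1 n, (a t - a (t + 1)) * b t ≤ D2 * b n - a (n + 1) * b n := by
  intro n hn
  induction n, hn using Nat.le_induction with
  | base =>
    intro haD
    simp only [Finset.Icc_self, Finset.sum_singleton]
    nlinarith [mul_le_mul_of_nonneg_right (haD 1 le_rfl (by norm_num)) (hb0 1)]
  | succ n hn ih =>
    intro haD
    have ih' := ih (fun t h1 h2 => haD t h1 (by omega))
    rw [Finset.sum_Icc_succ_top (by omega)]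
    have hDa : a (n + 1) ≤ D2 := haD (n + 1) (by omega) (by omega)
    nlinarith [mul_nonneg (sub_nonneg.2 hDa) (sub_nonneg.2 (hbmono n)), ha0 (n + 2), hb0 (n + 1), hbmono n]

lemma adangd_sum_div_sqrt (w : ℕ → ℝ) :
    ∀ n, 1 ≤ n → (∀ t, 1 ≤ t → t ≤ n → 0 < w t) →
      ∑ t ∈ Finset.Icc 1 n, w t / Real.sqrt (∑ τ ∈ Finset.Icc 1 t, w τ) ≤
        2 * Real.sqrt (∑ τ ∈ Finset.Icc 1 n, w τ) := by
  intro n hn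
  induction n, hn using Nat.le_induction with
  | base =>
    intro hw
    simp only [Finset.Icc_self, Finset.sum_singleton]
    rw [Real.div_sqrt]
    nlinarith [Real.sqrt_nonneg (w 1)]
  | succ n hn ih =>
    intro hw
    have ih' := ih (fun t h1 h2 => hw t h1 (by omega))
    rw [Finset.sum_Icc_succ_top (a := 1) (b := n) (by omega),
        Finset.sum_Icc_succ_top (a := 1) (b := n) (by omega)]
    set s := ∑ τ ∈ Finset.Icc 1 n, w τ with hs
    have hspos : 0 < s := Finset.sum_pos (fun t ht => hw t (Finset.mem_Icc.mp ht).1 (by have := (Finset.mem_Icc.mp ht).2; omega)) (by simp [hn])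
    have hwpos : 0 < w (n + 1) := hw (n + 1) (by omega) le_rfl
    have hs'pos : 0 < s + w (n + 1) := by linarith
    set u := Real.sqrt s with hu
    set v := Real.sqrt (s + w (n + 1)) with hv
    have hu2 : u ^ 2 = s := Real.sq_sqrt hspos.le
    have hv2 : v ^ 2 = s + w (n + 1) := Real.sq_sqrt hs'pos.le
    have hupos : 0 < u := Real.sqrt_pos.2 hspos
    have hvpos : 0 < v := Real.sqrt_pos.2 hs'pos
    have huv : u ≤ v := Real.sqrt_le_sqrt (by linarith)
    have key : w (n + 1) / v ≤ 2 * v - 2 * u := by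
      rw [div_le_iff₀ hvpos]
      nlinarith [sq_nonneg (v - u)]
    linarith

set_option maxHeartbeats 1000000 in
theorem adangd_two_general
    {d : ℕ} (T : ℕ) (hT : 1 ≤ T) (G : ℝ)
    (K : Set (EuclideanSpace ℝ (Fin d)))
    (hKne : K.Nonempty) (hKcl : IsClosed K) (hKbdd : Bornology.IsBounded K)
    (hKconv : Convex ℝ K)
    (proj : EuclideanSpace ℝ (Fin d) → EuclideanSpace ℝ (Fin d))
    (hproj_mem : ∀ y, proj y ∈ K)
    (hproj_min : ∀ y, ∀ z ∈ K, ‖proj y - y‖ ≤ ‖z - y‖)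
    (D : ℝ) (hD : D = Metric.diam K)
    (f : EuclideanSpace ℝ (Fin d) → ℝ)
    (hdiff : Differentiable ℝ f)
    (hconv : ∀ x y, f x + (inner ℝ (gradient f x) (y - x) : ℝ) ≤ f y)
    (hG : ∀ x ∈ K, ‖gradient f x‖ ≤ G)
    (x : ℕ → EuclideanSpace ℝ (Fin d)) (g : ℕ → EuclideanSpace ℝ (Fin d)) (η : ℕ → ℝ)
    (hx1 : x 1 ∈ K)
    (hg : ∀ t, g t = gradient f (x t))
    (hgne : ∀ t ∈ Finset.Icc 1 T, g t ≠ 0)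
    (hη : ∀ t, η t = D / Real.sqrt (2 * ∑ τ ∈ Finset.Icc 1 t, (‖g τ‖ ^ 2)⁻¹))
    (hupd : ∀ t ∈ Finset.Icc 1 T, x (t + 1) = proj (x t - (η t / ‖g t‖ ^ 2) • g t))
    (xbar : EuclideanSpace ℝ (Fin d))
    (hxbar : xbar = ∑ t ∈ Finset.Icc 1 T, (((‖g t‖ ^ 2)⁻¹) / ∑ τ ∈ Finset.Icc 1 T, (‖g τ‖ ^ 2)⁻¹) • x t)
    :
    (∀ xs ∈ K,
      f xbar - f xs ≤
        Real.sqrt (2 * D ^ 2) / Real.sqrt (∑ t ∈ Finset.Icc 1 T, (‖g t‖ ^ 2)⁻¹)) ∧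
    Real.sqrt (2 * D ^ 2) / Real.sqrt (∑ t ∈ Finset.Icc 1 T, (‖g t‖ ^ 2)⁻¹) ≤
      Real.sqrt 2 * G * D / Real.sqrt T := by
  set S : ℕ → ℝ := fun n => ∑ τ ∈ Finset.Icc 1 n, (‖g τ‖ ^ 2)⁻¹ with hSdef
  have hD0 : 0 ≤ D := hD ▸ Metric.diam_nonneg
  have hwnn : ∀ t : ℕ, 0 ≤ (‖g t‖ ^ 2)⁻¹ := fun t => by positivity
  have hwpos : ∀ t : ℕ, 1 ≤ t → t ≤ T → 0 < (‖g t‖ ^ 2)⁻¹ := by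
    intro t h1 h2
    have hne := hgne t (Finset.mem_Icc.mpr ⟨h1, h2⟩)
    have : 0 < ‖g t‖ := norm_pos_iff.mpr hne
    positivity
  have hSpos : ∀ t : ℕ, 1 ≤ t → t ≤ T → 0 < S t := by
    intro t h1 h2
    apply Finset.sum_pos
    · intro τ hτ
      obtain ⟨hτ1, hτ2⟩ := Finset.mem_Icc.mp hτ
      exact hwpos τ hτ1 (le_trans hτ2 h2)
    · exact ⟨1, Finset.mem_Icc.mpr ⟨le_rfl, h1⟩⟩
  have hSTpos : 0 < S T := hSpos T hT le_rfl
  have hSmono : ∀ t : ℕ, S t ≤ S (t + 1) := by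
    intro t
    apply Finset.sum_le_sum_of_subset_of_nonneg (Finset.Icc_subset_Icc_right (by omega))
    intro i _ _
    exact hwnn i
  have hxK : ∀ t : ℕ, 1 ≤ t → t ≤ T + 1 → x t ∈ K := by
    intro t
    induction t with
    | zero => omega
    | succ n _ =>
      intro _ h2
      by_cases hn : n = 0
      · subst hn; exact hx1
      · rw [hupd n (Finset.mem_Icc.mpr ⟨by omega, by omega⟩)]
        exact hproj_mem _
  have hdistD : ∀ a ∈ K, ∀ b ∈ K, ‖a - b‖ ≤ D := by
    intro a ha b hb
    rw [hD, ← dist_eq_norm]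
    exact Metric.dist_le_diam_of_mem hKbdd ha hb
  have hGpos : 0 < G := by
    have h1 : 0 < ‖g 1‖ := norm_pos_iff.mpr (hgne 1 (Finset.mem_Icc.mpr ⟨le_rfl, hT⟩))
    have h2 : ‖g 1‖ ≤ G := by rw [hg 1]; exact hG (x 1) hx1
    linarith
  have hlam1 : ∑ t ∈ Finset.Icc 1 T, (‖g t‖ ^ 2)⁻¹ / S T = 1 := by
    rw [← Finset.sum_div]
    exact div_self hSTpos.ne'
  have hlamnn : ∀ t : ℕ, 0 ≤ (‖g t‖ ^ 2)⁻¹ / S T := fun t => div_nonneg (hwnn t) hSTpos.le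
  constructor
  · intro xs hxs
    -- Regret bound
    have hregret : ∑ t ∈ Finset.Icc 1 T, (‖g t‖ ^ 2)⁻¹ * (inner ℝ (g t) (x t - xs) : ℝ) ≤
        Real.sqrt (2 * D ^ 2) * Real.sqrt (S T) := by
      rcases eq_or_lt_of_le hD0 with hDeq | hDpos
      · -- degenerate case D = 0
        have hx_eq : ∀ t ∈ Finset.Icc 1 T, x t = xs := by
          intro t ht
          obtain ⟨h1, h2⟩ := Finset.mem_Icc.mp ht
          have hle := hdistD (x t) (hxK t h1 (by omega)) xs hxs
          rw [← hDeq] at hle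
          have h0 : ‖x t - xs‖ = 0 := le_antisymm hle (norm_nonneg _)
          rwa [norm_eq_zero, sub_eq_zero] at h0
        have hz : ∑ t ∈ Finset.Icc 1 T, (‖g t‖ ^ 2)⁻¹ * (inner ℝ (g t) (x t - xs) : ℝ) = 0 := by
          apply Finset.sum_eq_zero
          intro t ht
          rw [hx_eq t ht, sub_self, inner_zero_right, mul_zero]
        rw [hz]
        positivity
      · -- main case D > 0
        have hηS : ∀ t, η t = D / Real.sqrt (2 * S t) := hη
        have h2Dpos : (0 : ℝ) < 2 * D := by linarith
        have hb0 : ∀ t : ℕ, 0 ≤ Real.sqrt (2 * S t) / (2 * D) :=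
          fun t => div_nonneg (Real.sqrt_nonneg _) h2Dpos.le
        have hbmono : ∀ t : ℕ, Real.sqrt (2 * S t) / (2 * D) ≤ Real.sqrt (2 * S (t + 1)) / (2 * D) :=
          by intro t; have h := hSmono t; gcongr <;> linarith
        have hηpos : ∀ t : ℕ, 1 ≤ t → t ≤ T → 0 < η t := by
          intro t h1 h2
          rw [hηS t]
          exact div_pos hDpos (Real.sqrt_pos.mpr (by linarith [hSpos t h1 h2]))
        have hstep : ∀ t ∈ Finset.Icc 1 T,
            (‖g t‖ ^ 2)⁻¹ * (inner ℝ (g t) (x t - xs) : ℝ) ≤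
              (‖x t - xs‖ ^ 2 - ‖x (t + 1) - xs‖ ^ 2) * (Real.sqrt (2 * S t) / (2 * D))
                + η t * (‖g t‖ ^ 2)⁻¹ / 2 := by
          intro t ht
          obtain ⟨h1, h2⟩ := Finset.mem_Icc.mp ht
          have hgt0 : ‖g t‖ ≠ 0 := norm_ne_zero_iff.mpr (hgne t ht)
          have hηp := hηpos t h1 h2
          have hsqrtp : 0 < Real.sqrt (2 * S t) :=
            Real.sqrt_pos.mpr (by linarith [hSpos t h1 h2])
          have hcontr : ‖x (t + 1) - xs‖ ≤ ‖(x t - (η t / ‖g t‖ ^ 2) • g t) - xs‖ := by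
            rw [hupd t ht]
            exact adangd_proj_contract hKconv proj hproj_mem hproj_min _ xs hxs
          have hsq : ‖x (t + 1) - xs‖ ^ 2 ≤ ‖(x t - xs) - (η t / ‖g t‖ ^ 2) • g t‖ ^ 2 := by
            rw [show (x t - xs) - (η t / ‖g t‖ ^ 2) • g t
                = (x t - (η t / ‖g t‖ ^ 2) • g t) - xs from by abel]
            exact pow_le_pow_left₀ (norm_nonneg _) hcontr 2
          have hexp : ‖(x t - xs) - (η t / ‖g t‖ ^ 2) • g t‖ ^ 2
              = ‖x t - xs‖ ^ 2 - 2 * ((η t / ‖g t‖ ^ 2) * (inner ℝ (g t) (x t - xs) : ℝ))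
                + (η t / ‖g t‖ ^ 2) ^ 2 * ‖g t‖ ^ 2 := by
            rw [@norm_sub_sq_real, real_inner_smul_right, norm_smul]
            simp only [Real.norm_eq_abs, mul_pow, sq_abs]
            rw [real_inner_comm]
          have hc2 : (η t / ‖g t‖ ^ 2) ^ 2 * ‖g t‖ ^ 2 = η t ^ 2 * (‖g t‖ ^ 2)⁻¹ := by
            field_simp
          have hbt : Real.sqrt (2 * S t) / (2 * D) = 1 / (2 * η t) := by
            rw [hηS t]
            field_simp
          rw [hbt, show (‖x t - xs‖ ^ 2 - ‖x (t + 1) - xs‖ ^ 2) * (1 / (2 * η t))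
              + η t * (‖g t‖ ^ 2)⁻¹ / 2
              = ((‖x t - xs‖ ^ 2 - ‖x (t + 1) - xs‖ ^ 2) + η t ^ 2 * (‖g t‖ ^ 2)⁻¹) / (2 * η t)
              from by field_simp, le_div_iff₀ (by linarith)]
          have h4 : ‖x (t + 1) - xs‖ ^ 2 ≤ ‖x t - xs‖ ^ 2
              - 2 * ((η t / ‖g t‖ ^ 2) * (inner ℝ (g t) (x t - xs) : ℝ))
              + η t ^ 2 * (‖g t‖ ^ 2)⁻¹ := by
            rw [← hc2]
            exact hsq.trans_eq hexp
          rw [div_eq_mul_inv (η t)] at h4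
          nlinarith [h4]
        have hsum := Finset.sum_le_sum hstep
        rw [Finset.sum_add_distrib] at hsum
        have haD : ∀ t : ℕ, 1 ≤ t → t ≤ T + 1 → ‖x t - xs‖ ^ 2 ≤ D ^ 2 := by
          intro t h1 h2
          have := hdistD (x t) (hxK t h1 h2) xs hxs
          nlinarith [norm_nonneg (x t - xs)]
        have htel := adangd_telescope (fun t => ‖x t - xs‖ ^ 2)
          (fun t => Real.sqrt (2 * S t) / (2 * D)) (D ^ 2)
          (fun t => sq_nonneg _) hb0 hbmono T hT haD
        have htel' : ∑ t ∈ Finset.Icc 1 T,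
            (‖x t - xs‖ ^ 2 - ‖x (t + 1) - xs‖ ^ 2) * (Real.sqrt (2 * S t) / (2 * D))
            ≤ D ^ 2 * (Real.sqrt (2 * S T) / (2 * D)) := by
          have hnn := mul_nonneg (sq_nonneg ‖x (T + 1) - xs‖) (hb0 T)
          linarith [htel]
        have hsd := adangd_sum_div_sqrt (fun τ => 2 * (‖g τ‖ ^ 2)⁻¹) T hT
          (fun t h1 h2 => by have := hwpos t h1 h2; linarith)
        have h2S : ∀ t : ℕ, (∑ τ ∈ Finset.Icc 1 t, 2 * (‖g τ‖ ^ 2)⁻¹) = 2 * S t := by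
          intro t
          simp only [hSdef]
          rw [← Finset.mul_sum]
        simp only [h2S] at hsd
        have hsum2 : ∑ t ∈ Finset.Icc 1 T, η t * (‖g t‖ ^ 2)⁻¹ / 2
            ≤ (D / 4) * (2 * Real.sqrt (2 * S T)) := by
          have heq : ∀ t ∈ Finset.Icc 1 T, η t * (‖g t‖ ^ 2)⁻¹ / 2
              = (D / 4) * ((2 * (‖g t‖ ^ 2)⁻¹) / Real.sqrt (2 * S t)) := by
            intro t ht
            obtain ⟨h1, h2⟩ := Finset.mem_Icc.mp ht
            have hsqrtp : 0 < Real.sqrt (2 * S t) :=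
              Real.sqrt_pos.mpr (by linarith [hSpos t h1 h2])
            rw [hηS t]
            field_simp
            ring
          rw [Finset.sum_congr rfl heq, ← Finset.mul_sum]
          exact mul_le_mul_of_nonneg_left hsd (by linarith)
        have hfin : ∑ t ∈ Finset.Icc 1 T, (‖g t‖ ^ 2)⁻¹ * (inner ℝ (g t) (x t - xs) : ℝ)
            ≤ D ^ 2 * (Real.sqrt (2 * S T) / (2 * D)) + (D / 4) * (2 * Real.sqrt (2 * S T)) := by
          linarith [hsum, htel', hsum2]
        have hrhs : D ^ 2 * (Real.sqrt (2 * S T) / (2 * D)) + (D / 4) * (2 * Real.sqrt (2 * S T))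
            = Real.sqrt (2 * D ^ 2) * Real.sqrt (S T) := by
          rw [Real.sqrt_mul (by norm_num : (0:ℝ) ≤ 2) (D ^ 2),
            Real.sqrt_mul (by norm_num : (0:ℝ) ≤ 2) (S T), Real.sqrt_sq hD0]
          field_simp
          ring
        linarith [hfin, hrhs.le, hrhs.ge]
    -- Jensen
    have hzero : ∑ t ∈ Finset.Icc 1 T, ((‖g t‖ ^ 2)⁻¹ / S T) • (x t - xbar) = 0 := by
      have h1 : ∑ t ∈ Finset.Icc 1 T, ((‖g t‖ ^ 2)⁻¹ / S T) • (x t - xbar)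
          = (∑ t ∈ Finset.Icc 1 T, ((‖g t‖ ^ 2)⁻¹ / S T) • x t)
            - (∑ t ∈ Finset.Icc 1 T, (‖g t‖ ^ 2)⁻¹ / S T) • xbar := by
        rw [Finset.sum_smul, ← Finset.sum_sub_distrib]
        exact Finset.sum_congr rfl fun t _ => smul_sub _ _ _
      rw [h1, ← hxbar, hlam1, one_smul, sub_self]
    have hinner0 : ∑ t ∈ Finset.Icc 1 T,
        ((‖g t‖ ^ 2)⁻¹ / S T) * (inner ℝ (gradient f xbar) (x t - xbar) : ℝ) = 0 := by
      have h1 : ∀ t ∈ Finset.Icc 1 T,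
          ((‖g t‖ ^ 2)⁻¹ / S T) * (inner ℝ (gradient f xbar) (x t - xbar) : ℝ)
          = (inner ℝ (gradient f xbar) (((‖g t‖ ^ 2)⁻¹ / S T) • (x t - xbar)) : ℝ) :=
        fun t _ => (real_inner_smul_right _ _ _).symm
      rw [Finset.sum_congr rfl h1, ← inner_sum, hzero, inner_zero_right]
    have hjensen : f xbar ≤ ∑ t ∈ Finset.Icc 1 T, ((‖g t‖ ^ 2)⁻¹ / S T) * f (x t) := by
      have hs := Finset.sum_le_sum (fun t (_ : t ∈ Finset.Icc 1 T) =>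
        mul_le_mul_of_nonneg_left (hconv xbar (x t)) (hlamnn t))
      simp only [mul_add] at hs
      rw [Finset.sum_add_distrib, ← Finset.sum_mul, hlam1, one_mul, hinner0, add_zero] at hs
      exact hs
    have hfx : ∀ t ∈ Finset.Icc 1 T, f (x t) - f xs ≤ (inner ℝ (g t) (x t - xs) : ℝ) := by
      intro t _
      have h1 := hconv (x t) xs
      have h2 : (inner ℝ (gradient f (x t)) (xs - x t) : ℝ)
          = -(inner ℝ (g t) (x t - xs) : ℝ) := by
        rw [hg t, ← inner_neg_right]
        congr 1
        abel
      rw [h2] at h1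
      linarith
    have hchain : f xbar - f xs ≤
        (∑ t ∈ Finset.Icc 1 T, (‖g t‖ ^ 2)⁻¹ * (inner ℝ (g t) (x t - xs) : ℝ)) / S T := by
      have h1 : ∑ t ∈ Finset.Icc 1 T, ((‖g t‖ ^ 2)⁻¹ / S T) * (f (x t) - f xs)
          ≤ ∑ t ∈ Finset.Icc 1 T, ((‖g t‖ ^ 2)⁻¹ / S T) * (inner ℝ (g t) (x t - xs) : ℝ) :=
        Finset.sum_le_sum fun t ht => mul_le_mul_of_nonneg_left (hfx t ht) (hlamnn t)
      have h2 : ∑ t ∈ Finset.Icc 1 T, ((‖g t‖ ^ 2)⁻¹ / S T) * (f (x t) - f xs)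
          = (∑ t ∈ Finset.Icc 1 T, ((‖g t‖ ^ 2)⁻¹ / S T) * f (x t)) - f xs := by
        simp only [mul_sub]
        rw [Finset.sum_sub_distrib, ← Finset.sum_mul, hlam1, one_mul]
      have h3 : ∑ t ∈ Finset.Icc 1 T, ((‖g t‖ ^ 2)⁻¹ / S T) * (inner ℝ (g t) (x t - xs) : ℝ)
          = (∑ t ∈ Finset.Icc 1 T, (‖g t‖ ^ 2)⁻¹ * (inner ℝ (g t) (x t - xs) : ℝ)) / S T := by
        rw [Finset.sum_div]
        exact Finset.sum_congr rfl fun t _ => by ring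
      rw [h2, h3] at h1
      linarith [hjensen]
    have hfinal : (∑ t ∈ Finset.Icc 1 T, (‖g t‖ ^ 2)⁻¹ * (inner ℝ (g t) (x t - xs) : ℝ)) / S T
        ≤ Real.sqrt (2 * D ^ 2) / Real.sqrt (S T) := by
      have h4 : (∑ t ∈ Finset.Icc 1 T, (‖g t‖ ^ 2)⁻¹ * (inner ℝ (g t) (x t - xs) : ℝ)) / S T
          ≤ Real.sqrt (2 * D ^ 2) * Real.sqrt (S T) / S T := by gcongr
      have h5 : Real.sqrt (2 * D ^ 2) * Real.sqrt (S T) / S T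
          = Real.sqrt (2 * D ^ 2) / Real.sqrt (S T) := by
        rw [div_eq_div_iff hSTpos.ne' (Real.sqrt_pos.mpr hSTpos).ne', mul_assoc,
          Real.mul_self_sqrt hSTpos.le]
      linarith [h4, h5.le, h5.ge]
    exact le_trans hchain hfinal
  · -- second part
    have hSlb : (T : ℝ) * (G ^ 2)⁻¹ ≤ S T := by
      have h1 : (T : ℝ) * (G ^ 2)⁻¹ = ∑ _t ∈ Finset.Icc 1 T, (G ^ 2)⁻¹ := by
        rw [Finset.sum_const, Nat.card_Icc]
        simp [nsmul_eq_mul]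
      rw [h1]
      apply Finset.sum_le_sum
      intro t ht
      obtain ⟨h1', h2'⟩ := Finset.mem_Icc.mp ht
      have hgle : ‖g t‖ ≤ G := by rw [hg t]; exact hG (x t) (hxK t h1' (by omega))
      have hgp : 0 < ‖g t‖ := norm_pos_iff.mpr (hgne t ht)
      have : ‖g t‖ ^ 2 ≤ G ^ 2 := by nlinarith
      exact inv_anti₀ (by positivity) this
    have hTpos : (0 : ℝ) < T := by exact_mod_cast Nat.lt_of_lt_of_le Nat.zero_lt_one hT
    have hsqrtT : Real.sqrt T ≤ G * Real.sqrt (S T) := by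
      have h1 : Real.sqrt ((T : ℝ) * (G ^ 2)⁻¹) ≤ Real.sqrt (S T) := Real.sqrt_le_sqrt hSlb
      rw [Real.sqrt_mul hTpos.le, Real.sqrt_inv, Real.sqrt_sq hGpos.le] at h1
      calc Real.sqrt T = G * (Real.sqrt T * G⁻¹) := by field_simp
      _ ≤ G * Real.sqrt (S T) := mul_le_mul_of_nonneg_left h1 hGpos.le
    have h2D : Real.sqrt (2 * D ^ 2) = Real.sqrt 2 * D := by
      rw [Real.sqrt_mul (by norm_num), Real.sqrt_sq hD0]
    rw [h2D, div_le_div_iff₀ (Real.sqrt_pos.mpr hSTpos) (Real.sqrt_pos.mpr hTpos)]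
    have hmul := mul_le_mul_of_nonneg_left hsqrtT
      (mul_nonneg (Real.sqrt_nonneg 2) hD0)
    nlinarith [hmul]
end

section
/- (AdaNGD_2, smooth case.) Let f : ℝ^d → ℝ be convex, differentiable and β-smooth, and suppose the global minimizer x* := argmin_{x ∈ ℝ^d} f(x) exists and belongs to K. Let x_1, …, x_T and x̄_T be the AdaNGD_k iterates and output with k = 2, with g_t := ∇f(x_t) ≠ 0 for all t = 1, …, T. Then f(x̄_T) − min_{x ∈ K} f(x) ≤ √(2 D²) / √(Σ_{t=1}^T 1/‖g_t‖²) ≤ 4 β D² / T. -/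
open Finset

/-- Telescoping sum with increasing coefficients. -/
lemma tele_aux (a b : ℕ → ℝ) (D2 : ℝ) (n : ℕ) (hn : 1 ≤ n)
    (ha0 : ∀ t ∈ Finset.Icc 1 (n+1), 0 ≤ a t)
    (haD : ∀ t ∈ Finset.Icc 1 (n+1), a t ≤ D2)
    (hb0 : ∀ t ∈ Finset.Icc 1 n, 0 ≤ b t)
    (hbm : ∀ t ∈ Finset.Icc 1 n, ∀ s ∈ Finset.Icc 1 n, t ≤ s → b t ≤ b s) :
    ∑ t ∈ Finset.Icc 1 n, (a t - a (t+1)) * b t ≤ D2 * b n - a (n+1) * b n := by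
  induction n with
  | zero => omega
  | succ m ih =>
    rcases Nat.eq_or_lt_of_le hn with h1 | h1
    · have hm0 : m = 0 := by omega
      subst hm0
      simp only [Finset.Icc_self, Finset.sum_singleton]
      have h1' : (1:ℕ) ∈ Finset.Icc 1 (1+1) := by simp
      have h2' : (2:ℕ) ∈ Finset.Icc 1 (1+1) := by simp
      have hb : 0 ≤ b 1 := hb0 1 (by simp)
      nlinarith [ha0 2 h2', haD 1 h1', ha0 1 h1']
    · have hm : 1 ≤ m := by omega
      rw [Finset.sum_Icc_succ_top (by omega : 1 ≤ m + 1)]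
      have ihh := ih hm (fun t ht => ha0 t (by simp only [Finset.mem_Icc] at ht ⊢; omega))
        (fun t ht => haD t (by simp only [Finset.mem_Icc] at ht ⊢; omega))
        (fun t ht => hb0 t (by simp only [Finset.mem_Icc] at ht ⊢; omega))
        (fun t ht s hs hts => hbm t (by simp only [Finset.mem_Icc] at ht ⊢; omega) s (by simp only [Finset.mem_Icc] at hs ⊢; omega) hts)
      have hbmm : b m ≤ b (m+1) := hbm m (by simp only [Finset.mem_Icc]; omega) (m+1) (by simp only [Finset.mem_Icc]; omega) (by omega)
      have hb1 : 0 ≤ b (m+1) := hb0 (m+1) (by simp)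
      have haD1 : a (m+1) ≤ D2 := haD (m+1) (by simp only [Finset.mem_Icc]; omega)
      have ha02 : 0 ≤ a (m+2) := ha0 (m+2) (by simp)
      nlinarith

/-- ∑ w_t / √S_t ≤ 2 √S_n for positive weights. -/
lemma sqrtsum_aux (w : ℕ → ℝ) (n : ℕ) (hn : 1 ≤ n)
    (hw : ∀ t ∈ Finset.Icc 1 n, 0 < w t) :
    ∑ t ∈ Finset.Icc 1 n, w t / Real.sqrt (∑ τ ∈ Finset.Icc 1 t, w τ) ≤
      2 * Real.sqrt (∑ τ ∈ Finset.Icc 1 n, w τ) := by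
  induction n with
  | zero => omega
  | succ m ih =>
    rcases Nat.eq_or_lt_of_le hn with h1 | h1
    · have hm0 : m = 0 := by omega
      subst hm0
      simp only [Finset.Icc_self, Finset.sum_singleton]
      rw [Real.div_sqrt]
      have := Real.sqrt_nonneg (w 1)
      linarith
    · have hm : 1 ≤ m := by omega
      have hw' : ∀ t ∈ Finset.Icc 1 m, 0 < w t :=
        fun t ht => hw t (by simp only [Finset.mem_Icc] at ht ⊢; omega)
      have ihh := ih hm hw'
      rw [Finset.sum_Icc_succ_top (by omega : 1 ≤ m + 1),
          Finset.sum_Icc_succ_top (by omega : 1 ≤ m + 1)]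
      set Sm := ∑ τ ∈ Finset.Icc 1 m, w τ with hSm
      have hSmpos : 0 < Sm := Finset.sum_pos hw' (by simp only [Finset.nonempty_Icc]; omega)
      have hwpos : 0 < w (m+1) := hw (m+1) (by simp only [Finset.mem_Icc]; omega)
      have hS'pos : 0 < Sm + w (m+1) := by linarith
      set a := Real.sqrt Sm with ha
      set b := Real.sqrt (Sm + w (m+1)) with hb
      have ha2 : a ^ 2 = Sm := Real.sq_sqrt hSmpos.le
      have hb2 : b ^ 2 = Sm + w (m+1) := Real.sq_sqrt hS'pos.le
      have hbpos : 0 < b := Real.sqrt_pos.mpr hS'pos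
      have hanneg : 0 ≤ a := Real.sqrt_nonneg _
      have hdiv : w (m+1) / b ≤ 2 * b - 2 * a := by
        rw [div_le_iff₀ hbpos]
        nlinarith [sq_nonneg (b - a)]
      linarith

/-- The metric projection onto a convex set does not increase distances to points of the set. -/
lemma proj_contract {F : Type*} [NormedAddCommGroup F] [InnerProductSpace ℝ F]
    (K : Set F) (hKconv : Convex ℝ K) (proj : F → F)
    (hproj_mem : ∀ y, proj y ∈ K) (hproj_min : ∀ y, ∀ z ∈ K, ‖proj y - y‖ ≤ ‖z - y‖)
    (y xs : F) (hxs : xs ∈ K) : ‖proj y - xs‖ ≤ ‖y - xs‖ := by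
  set p := proj y with hp
  have hne : Nonempty K := ⟨⟨p, hproj_mem y⟩⟩
  have heq : ‖y - p‖ = ⨅ w : K, ‖y - w‖ := by
    apply le_antisymm
    · apply le_ciInf
      intro w
      rw [norm_sub_rev y p, norm_sub_rev y w]
      exact hproj_min y w w.2
    · have hbdd : BddBelow (Set.range fun w : K => ‖y - (w : F)‖) := by
        refine ⟨0, ?_⟩
        rintro r ⟨w, rfl⟩
        exact norm_nonneg _
      exact ciInf_le hbdd ⟨p, hproj_mem y⟩
  have hinner : (inner ℝ (y - p) (xs - p) : ℝ) ≤ 0 :=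
    (norm_eq_iInf_iff_real_inner_le_zero hKconv (hproj_mem y)).mp heq xs hxs
  have key : ‖p - xs‖ ^ 2 ≤ ‖y - xs‖ ^ 2 := by
    have hd : y - xs = (y - p) + (p - xs) := by abel
    rw [hd, norm_add_sq_real]
    have hi : (inner ℝ (y - p) (p - xs) : ℝ) = -(inner ℝ (y - p) (xs - p) : ℝ) := by
      rw [← inner_neg_right]
      congr 1
      abel
    nlinarith [sq_nonneg ‖y - p‖]
  have := Real.sqrt_le_sqrt key
  rwa [Real.sqrt_sq (norm_nonneg _), Real.sqrt_sq (norm_nonneg _)] at this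

/-- Smoothness + global minimum: ‖∇f(x)‖² ≤ 2β (f x − f x*). -/
lemma grad_sq_le {F : Type*} [NormedAddCommGroup F] [InnerProductSpace ℝ F] [CompleteSpace F]
    (f : F → ℝ) (β : ℝ) (hβ : 0 < β)
    (hsmooth : ∀ x y, f y ≤ f x + (inner ℝ (gradient f x) (y - x) : ℝ) + (β / 2) * ‖x - y‖ ^ 2)
    (xstar : F) (hmin : ∀ y, f xstar ≤ f y) (x : F) :
    ‖gradient f x‖ ^ 2 ≤ 2 * β * (f x - f xstar) := by
  set G := gradient f x with hG
  have h1 := hsmooth x (x - β⁻¹ • G)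
  have h2 := hmin (x - β⁻¹ • G)
  have hy : x - β⁻¹ • G - x = -(β⁻¹ • G) := by abel
  have hx : x - (x - β⁻¹ • G) = β⁻¹ • G := by abel
  rw [hy, hx, inner_neg_right, real_inner_smul_right, real_inner_self_eq_norm_sq,
      norm_smul, Real.norm_eq_abs, abs_of_pos (inv_pos.mpr hβ), mul_pow] at h1
  have h3 : β / 2 * (β⁻¹ ^ 2 * ‖G‖ ^ 2) = (1/2) * (β⁻¹ * ‖G‖ ^ 2) := by
    field_simp
  rw [h3] at h1
  have key : β⁻¹ * ‖G‖ ^ 2 ≤ 2 * (f x - f xstar) := by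
    rw [hG]
    linarith
  have h4 : ‖G‖ ^ 2 = β * (β⁻¹ * ‖G‖ ^ 2) := by
    field_simp
  rw [h4]
  calc β * (β⁻¹ * ‖G‖ ^ 2) ≤ β * (2 * (f x - f xstar)) :=
        mul_le_mul_of_nonneg_left key hβ.le
    _ = 2 * β * (f x - f xstar) := by ring

lemma combine_aux (D r s2 : ℝ) (hD : 0 < D) (hs2 : 0 < s2) (hs2sq : s2 ^ 2 = 2) :
    D ^ 2 * (s2 * r / (2 * D)) + D / (2 * s2) * (2 * r) = s2 * D * r := by
  have h1 : D ^ 2 * (s2 * r / (2 * D)) = D * s2 * r / 2 := by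
    field_simp
  have h2 : D / (2 * s2) * (2 * r) = D * r / s2 := by
    field_simp
  have h3 : D * r / s2 = D * s2 * r / 2 := by
    rw [div_eq_div_iff hs2.ne' (by norm_num : (2:ℝ) ≠ 0)]
    linear_combination (-(D * r)) * hs2sq
  rw [h1, h2, h3]
  ring

set_option maxHeartbeats 1000000 in
theorem adangd_two_smooth
    {d : ℕ} (T : ℕ) (hT : 1 ≤ T) (β : ℝ)
    (K : Set (EuclideanSpace ℝ (Fin d)))
    (hKne : K.Nonempty) (hKcl : IsClosed K) (hKbdd : Bornology.IsBounded K)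
    (hKconv : Convex ℝ K)
    (proj : EuclideanSpace ℝ (Fin d) → EuclideanSpace ℝ (Fin d))
    (hproj_mem : ∀ y, proj y ∈ K)
    (hproj_min : ∀ y, ∀ z ∈ K, ‖proj y - y‖ ≤ ‖z - y‖)
    (D : ℝ) (hD : D = Metric.diam K)
    (f : EuclideanSpace ℝ (Fin d) → ℝ)
    (hdiff : Differentiable ℝ f)
    (hconv : ∀ x y, f x + (inner ℝ (gradient f x) (y - x) : ℝ) ≤ f y)
    (hsmooth : ∀ x y, f y ≤ f x + (inner ℝ (gradient f x) (y - x) : ℝ) + (β / 2) * ‖x - y‖ ^ 2)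
    (xstar : EuclideanSpace ℝ (Fin d)) (hxstarK : xstar ∈ K)
    (hmin : ∀ y, f xstar ≤ f y)
    (x : ℕ → EuclideanSpace ℝ (Fin d)) (g : ℕ → EuclideanSpace ℝ (Fin d)) (η : ℕ → ℝ)
    (hx1 : x 1 ∈ K)
    (hg : ∀ t, g t = gradient f (x t))
    (hgne : ∀ t ∈ Finset.Icc 1 T, g t ≠ 0)
    (hη : ∀ t, η t = D / Real.sqrt (2 * ∑ τ ∈ Finset.Icc 1 t, (‖g τ‖ ^ 2)⁻¹))
    (hupd : ∀ t ∈ Finset.Icc 1 T, x (t + 1) = proj (x t - (η t / ‖g t‖ ^ 2) • g t))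
    (xbar : EuclideanSpace ℝ (Fin d))
    (hxbar : xbar = ∑ t ∈ Finset.Icc 1 T, (((‖g t‖ ^ 2)⁻¹) / ∑ τ ∈ Finset.Icc 1 T, (‖g τ‖ ^ 2)⁻¹) • x t)
    :
    (∀ xs ∈ K,
      f xbar - f xs ≤
        Real.sqrt (2 * D ^ 2) / Real.sqrt (∑ t ∈ Finset.Icc 1 T, (‖g t‖ ^ 2)⁻¹)) ∧
    Real.sqrt (2 * D ^ 2) / Real.sqrt (∑ t ∈ Finset.Icc 1 T, (‖g t‖ ^ 2)⁻¹) ≤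
      4 * β * D ^ 2 / T := by
  -- basic positivity of β
  have h1T : (1:ℕ) ∈ Finset.Icc 1 T := by simp only [Finset.mem_Icc]; omega
  have hβpos : 0 < β := by
    by_contra hβ
    push_neg at hβ
    -- gradient at xstar vanishes and f is constant
    have hgs : ∀ y, 0 ≤ (inner ℝ (gradient f xstar) (y - xstar) : ℝ) := by
      intro y
      nlinarith [hsmooth xstar y, hmin y, sq_nonneg ‖xstar - y‖]
    have hGstar : gradient f xstar = 0 := by
      have h := hgs (xstar - gradient f xstar)
      rw [show xstar - gradient f xstar - xstar = -(gradient f xstar) by abel,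
        inner_neg_right, real_inner_self_eq_norm_sq] at h
      have h2 : ‖gradient f xstar‖ ^ 2 = 0 := le_antisymm (by linarith) (sq_nonneg _)
      have h3 : ‖gradient f xstar‖ = 0 := by
        have := pow_eq_zero_iff (two_ne_zero) |>.mp h2
        exact this
      exact norm_eq_zero.mp h3
    have hfc : ∀ y, f y = f xstar := by
      intro y
      refine le_antisymm ?_ (hmin y)
      have h := hsmooth xstar y
      rw [hGstar] at h
      simp only [inner_zero_left] at h
      nlinarith [sq_nonneg ‖xstar - y‖]
    apply hgne 1 h1T
    have h := hconv (x 1) (x 1 + gradient f (x 1))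
    rw [show x 1 + gradient f (x 1) - x 1 = gradient f (x 1) by abel,
      real_inner_self_eq_norm_sq, hfc (x 1 + gradient f (x 1)), hfc (x 1)] at h
    have h2 : ‖gradient f (x 1)‖ ^ 2 = 0 := le_antisymm (by linarith) (sq_nonneg _)
    rw [hg 1]
    exact norm_eq_zero.mp (pow_eq_zero_iff (two_ne_zero) |>.mp h2)
  have hgrad : ∀ z, ‖gradient f z‖ ^ 2 ≤ 2 * β * (f z - f xstar) :=
    grad_sq_le f β hβpos hsmooth xstar hmin
  have hD0 : 0 ≤ D := hD ▸ Metric.diam_nonneg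
  have hDpos : 0 < D := by
    rcases hD0.lt_or_eq with h | h
    · exact h
    · exfalso
      apply hgne 1 h1T
      have hd1 : dist (x 1) xstar ≤ Metric.diam K := Metric.dist_le_diam_of_mem hKbdd hx1 hxstarK
      rw [← hD, ← h] at hd1
      have hx1s : x 1 = xstar := by
        have := dist_nonneg (x := x 1) (y := xstar)
        have : dist (x 1) xstar = 0 := le_antisymm hd1 this
        exact dist_eq_zero.mp this
      have := hgrad (x 1)
      rw [← hg 1] at this
      have h2 : ‖g 1‖ ^ 2 = 0 := by
        have hfx : f (x 1) = f xstar := by rw [hx1s]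
        nlinarith [sq_nonneg ‖g 1‖]
      exact norm_eq_zero.mp (pow_eq_zero_iff (two_ne_zero) |>.mp h2)
  -- iterates stay in K
  have hxK : ∀ n, 1 ≤ n → n ≤ T + 1 → x n ∈ K := by
    intro n
    induction n with
    | zero => omega
    | succ m ih =>
      intro _ hle
      rcases Nat.eq_zero_or_pos m with hm | hm
      · subst hm; exact hx1
      · have hmem : m ∈ Finset.Icc 1 T := by simp only [Finset.mem_Icc]; omega
        rw [hupd m hmem]
        exact hproj_mem _
  -- weights
  have hwnn : ∀ t : ℕ, 0 ≤ (‖g t‖ ^ 2)⁻¹ := fun t => inv_nonneg.mpr (by positivity)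
  have hwpos : ∀ t ∈ Finset.Icc 1 T, 0 < (‖g t‖ ^ 2)⁻¹ := fun t ht =>
    inv_pos.mpr (pow_pos (norm_pos_iff.mpr (hgne t ht)) 2)
  have hSpos : ∀ n, 1 ≤ n → n ≤ T → 0 < ∑ τ ∈ Finset.Icc 1 n, (‖g τ‖ ^ 2)⁻¹ := by
    intro n h1 h2
    apply Finset.sum_pos
    · intro τ hτ
      exact hwpos τ (by simp only [Finset.mem_Icc] at hτ ⊢; omega)
    · simp only [Finset.nonempty_Icc]; omega
  have hSmono : ∀ m n, m ≤ n → (∑ τ ∈ Finset.Icc 1 m, (‖g τ‖ ^ 2)⁻¹) ≤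
      ∑ τ ∈ Finset.Icc 1 n, (‖g τ‖ ^ 2)⁻¹ := by
    intro m n hmn
    apply Finset.sum_le_sum_of_subset_of_nonneg
    · exact Finset.Icc_subset_Icc_right hmn
    · intro τ _ _
      exact hwnn τ
  have hηpos : ∀ t ∈ Finset.Icc 1 T, 0 < η t := by
    intro t ht
    simp only [Finset.mem_Icc] at ht
    rw [hη]
    apply div_pos hDpos
    apply Real.sqrt_pos.mpr
    have := hSpos t ht.1 ht.2
    linarith
  -- equality for the step-size coefficient
  have hb_eq : ∀ t, 1 ≤ t → t ≤ T → (2 * η t)⁻¹ =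
      Real.sqrt (2 * ∑ τ ∈ Finset.Icc 1 t, (‖g τ‖ ^ 2)⁻¹) / (2 * D) := by
    intro t h1 h2
    have hr : 0 < Real.sqrt (2 * ∑ τ ∈ Finset.Icc 1 t, (‖g τ‖ ^ 2)⁻¹) :=
      Real.sqrt_pos.mpr (by linarith [hSpos t h1 h2])
    rw [hη]
    field_simp
  -- per-step inequality
  have hstep : ∀ xs ∈ K, ∀ t ∈ Finset.Icc 1 T,
      (‖g t‖ ^ 2)⁻¹ * (inner ℝ (g t) (x t - xs) : ℝ) ≤
        (‖x t - xs‖ ^ 2 - ‖x (t+1) - xs‖ ^ 2) * (2 * η t)⁻¹ + η t * (‖g t‖ ^ 2)⁻¹ / 2 := by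
    intro xs hxs t ht
    have hηt := hηpos t ht
    have hgt0 : ‖g t‖ ^ 2 ≠ 0 := pow_ne_zero 2 (norm_ne_zero_iff.mpr (hgne t ht))
    have hproj2 : ‖x (t+1) - xs‖ ≤ ‖(x t - (η t / ‖g t‖ ^ 2) • g t) - xs‖ := by
      rw [hupd t ht]
      exact proj_contract K hKconv proj hproj_mem hproj_min _ xs hxs
    have hsq : ‖x (t+1) - xs‖ ^ 2 ≤ ‖(x t - (η t / ‖g t‖ ^ 2) • g t) - xs‖ ^ 2 :=
      pow_le_pow_left₀ (norm_nonneg _) hproj2 2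
    have hexp : ‖(x t - (η t / ‖g t‖ ^ 2) • g t) - xs‖ ^ 2 =
        ‖x t - xs‖ ^ 2 - 2 * (η t * ((‖g t‖ ^ 2)⁻¹ * (inner ℝ (g t) (x t - xs) : ℝ)))
          + η t ^ 2 * (‖g t‖ ^ 2)⁻¹ := by
      have hd : (x t - (η t / ‖g t‖ ^ 2) • g t) - xs = (x t - xs) - (η t / ‖g t‖ ^ 2) • g t := by
        abel
      rw [hd, norm_sub_sq_real, real_inner_smul_right, real_inner_comm, norm_smul,
        Real.norm_eq_abs, mul_pow, sq_abs]
      field_simp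
    rw [hexp] at hsq
    have hη2 : (0:ℝ) < 2 * η t := by linarith
    have hu : (2 * η t) * (2 * η t)⁻¹ = 1 := mul_inv_cancel₀ hη2.ne'
    nlinarith [hsq, hη2, hu, mul_pos hη2 (inv_pos.mpr hη2)]
  -- regret-type bound
  have hREG : ∀ xs ∈ K,
      ∑ t ∈ Finset.Icc 1 T, (‖g t‖ ^ 2)⁻¹ * (inner ℝ (g t) (x t - xs) : ℝ) ≤
      Real.sqrt 2 * D * Real.sqrt (∑ τ ∈ Finset.Icc 1 T, (‖g τ‖ ^ 2)⁻¹) := by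
    intro xs hxs
    have hsum := Finset.sum_le_sum (hstep xs hxs)
    rw [Finset.sum_add_distrib] at hsum
    -- telescoping part
    have haD : ∀ t ∈ Finset.Icc 1 (T+1), ‖x t - xs‖ ^ 2 ≤ D ^ 2 := by
      intro t ht
      simp only [Finset.mem_Icc] at ht
      have h1 : ‖x t - xs‖ ≤ D := by
        rw [← dist_eq_norm, hD]
        exact Metric.dist_le_diam_of_mem hKbdd (hxK t ht.1 ht.2) hxs
      exact pow_le_pow_left₀ (norm_nonneg _) h1 2
    have hbm : ∀ t ∈ Finset.Icc 1 T, ∀ s ∈ Finset.Icc 1 T, t ≤ s →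
        (2 * η t)⁻¹ ≤ (2 * η s)⁻¹ := by
      intro t ht s hs hts
      simp only [Finset.mem_Icc] at ht hs
      rw [hb_eq t ht.1 ht.2, hb_eq s hs.1 hs.2,
        div_le_div_iff_of_pos_right (by positivity : (0:ℝ) < 2 * D)]
      exact Real.sqrt_le_sqrt (by linarith [hSmono t s hts])
    have htele := tele_aux (fun t => ‖x t - xs‖ ^ 2) (fun t => (2 * η t)⁻¹) (D ^ 2) T hT
      (fun t _ => sq_nonneg _) haD
      (fun t ht => (inv_pos.mpr (by linarith [hηpos t ht])).le) hbm
    have hteleT : ∑ t ∈ Finset.Icc 1 T, (‖x t - xs‖ ^ 2 - ‖x (t+1) - xs‖ ^ 2) * (2 * η t)⁻¹ ≤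
        D ^ 2 * (2 * η T)⁻¹ := by
      have hTmem : T ∈ Finset.Icc 1 T := by simp only [Finset.mem_Icc]; omega
      have h1 : 0 ≤ ‖x (T+1) - xs‖ ^ 2 * (2 * η T)⁻¹ :=
        mul_nonneg (sq_nonneg _) (inv_pos.mpr (by linarith [hηpos T hTmem])).le
      linarith [htele]
    -- second part
    have h1 : ∀ t ∈ Finset.Icc 1 T, η t * (‖g t‖ ^ 2)⁻¹ / 2 =
        D / (2 * Real.sqrt 2) *
          ((‖g t‖ ^ 2)⁻¹ / Real.sqrt (∑ τ ∈ Finset.Icc 1 t, (‖g τ‖ ^ 2)⁻¹)) := by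
      intro t ht
      simp only [Finset.mem_Icc] at ht
      rw [hη, Real.sqrt_mul (by norm_num : (0:ℝ) ≤ 2)]
      have hrt : 0 < Real.sqrt (∑ τ ∈ Finset.Icc 1 t, (‖g τ‖ ^ 2)⁻¹) :=
        Real.sqrt_pos.mpr (hSpos t ht.1 ht.2)
      have hs2 : (0:ℝ) < Real.sqrt 2 := by positivity
      field_simp
    have hsecond : ∑ t ∈ Finset.Icc 1 T, η t * (‖g t‖ ^ 2)⁻¹ / 2 ≤
        D / (2 * Real.sqrt 2) * (2 * Real.sqrt (∑ τ ∈ Finset.Icc 1 T, (‖g τ‖ ^ 2)⁻¹)) := by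
      rw [Finset.sum_congr rfl h1, ← Finset.mul_sum]
      have hs2 : (0:ℝ) ≤ D / (2 * Real.sqrt 2) := by positivity
      exact mul_le_mul_of_nonneg_left (sqrtsum_aux _ T hT hwpos) hs2
    -- combine
    have hfinal : D ^ 2 * (2 * η T)⁻¹ +
        D / (2 * Real.sqrt 2) * (2 * Real.sqrt (∑ τ ∈ Finset.Icc 1 T, (‖g τ‖ ^ 2)⁻¹)) =
        Real.sqrt 2 * D * Real.sqrt (∑ τ ∈ Finset.Icc 1 T, (‖g τ‖ ^ 2)⁻¹) := by
      rw [hb_eq T hT le_rfl, Real.sqrt_mul (by norm_num : (0:ℝ) ≤ 2)]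
      exact combine_aux D _ _ hDpos (Real.sqrt_pos.mpr (by norm_num)) (Real.sq_sqrt (by norm_num))
    linarith [hsum, hteleT, hsecond]
  have hSTpos : 0 < ∑ τ ∈ Finset.Icc 1 T, (‖g τ‖ ^ 2)⁻¹ := hSpos T hT le_rfl
  have hrT : 0 < Real.sqrt (∑ τ ∈ Finset.Icc 1 T, (‖g τ‖ ^ 2)⁻¹) := Real.sqrt_pos.mpr hSTpos
  have hlsum : ∑ t ∈ Finset.Icc 1 T,
      (‖g t‖ ^ 2)⁻¹ / (∑ τ ∈ Finset.Icc 1 T, (‖g τ‖ ^ 2)⁻¹) = 1 := by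
    rw [← Finset.sum_div]
    exact div_self hSTpos.ne'
  -- Jensen step via the gradient inequality at xbar
  have hjensen : f xbar ≤ ∑ t ∈ Finset.Icc 1 T,
      ((‖g t‖ ^ 2)⁻¹ / (∑ τ ∈ Finset.Icc 1 T, (‖g τ‖ ^ 2)⁻¹)) * f (x t) := by
    have hsum0 : ∑ t ∈ Finset.Icc 1 T,
        ((‖g t‖ ^ 2)⁻¹ / (∑ τ ∈ Finset.Icc 1 T, (‖g τ‖ ^ 2)⁻¹)) • (x t - xbar) = 0 := by
      simp only [smul_sub]
      rw [Finset.sum_sub_distrib, ← hxbar, ← Finset.sum_smul, hlsum, one_smul, sub_self]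
    have hinner : ∑ t ∈ Finset.Icc 1 T,
        ((‖g t‖ ^ 2)⁻¹ / (∑ τ ∈ Finset.Icc 1 T, (‖g τ‖ ^ 2)⁻¹)) *
          (inner ℝ (gradient f xbar) (x t - xbar) : ℝ) = 0 := by
      have h1 : ∀ t ∈ Finset.Icc 1 T,
          ((‖g t‖ ^ 2)⁻¹ / (∑ τ ∈ Finset.Icc 1 T, (‖g τ‖ ^ 2)⁻¹)) *
            (inner ℝ (gradient f xbar) (x t - xbar) : ℝ) =
          (inner ℝ (gradient f xbar)
            (((‖g t‖ ^ 2)⁻¹ / (∑ τ ∈ Finset.Icc 1 T, (‖g τ‖ ^ 2)⁻¹)) • (x t - xbar)) : ℝ) :=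
        fun t _ => (real_inner_smul_right _ _ _).symm
      rw [Finset.sum_congr rfl h1, ← inner_sum, hsum0, inner_zero_right]
    have h2 : ∑ t ∈ Finset.Icc 1 T,
        ((‖g t‖ ^ 2)⁻¹ / (∑ τ ∈ Finset.Icc 1 T, (‖g τ‖ ^ 2)⁻¹)) *
          (f xbar + (inner ℝ (gradient f xbar) (x t - xbar) : ℝ)) ≤
        ∑ t ∈ Finset.Icc 1 T,
          ((‖g t‖ ^ 2)⁻¹ / (∑ τ ∈ Finset.Icc 1 T, (‖g τ‖ ^ 2)⁻¹)) * f (x t) :=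
      Finset.sum_le_sum fun t _ =>
        mul_le_mul_of_nonneg_left (hconv xbar (x t)) (div_nonneg (hwnn t) hSTpos.le)
    calc f xbar = ∑ t ∈ Finset.Icc 1 T,
        ((‖g t‖ ^ 2)⁻¹ / (∑ τ ∈ Finset.Icc 1 T, (‖g τ‖ ^ 2)⁻¹)) *
          (f xbar + (inner ℝ (gradient f xbar) (x t - xbar) : ℝ)) := by
          simp only [mul_add]
          rw [Finset.sum_add_distrib, ← Finset.sum_mul, hlsum, one_mul, hinner, add_zero]
      _ ≤ _ := h2
  -- pointwise convexity bound
  have hptconv : ∀ (t : ℕ) (xs : EuclideanSpace ℝ (Fin d)),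
      f (x t) - f xs ≤ (inner ℝ (g t) (x t - xs) : ℝ) := by
    intro t xs
    have h := hconv (x t) xs
    rw [show xs - x t = -(x t - xs) by abel, inner_neg_right, ← hg t] at h
    linarith
  constructor
  · -- Part 1
    intro xs hxs
    have hch : ∑ t ∈ Finset.Icc 1 T,
        ((‖g t‖ ^ 2)⁻¹ / (∑ τ ∈ Finset.Icc 1 T, (‖g τ‖ ^ 2)⁻¹)) * (f (x t) - f xs) ≤
        ∑ t ∈ Finset.Icc 1 T,
          ((‖g t‖ ^ 2)⁻¹ / (∑ τ ∈ Finset.Icc 1 T, (‖g τ‖ ^ 2)⁻¹)) *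
            (inner ℝ (g t) (x t - xs) : ℝ) :=
      Finset.sum_le_sum fun t _ =>
        mul_le_mul_of_nonneg_left (hptconv t xs) (div_nonneg (hwnn t) hSTpos.le)
    have heq1 : ∑ t ∈ Finset.Icc 1 T,
        ((‖g t‖ ^ 2)⁻¹ / (∑ τ ∈ Finset.Icc 1 T, (‖g τ‖ ^ 2)⁻¹)) * (f (x t) - f xs) =
        (∑ t ∈ Finset.Icc 1 T,
          ((‖g t‖ ^ 2)⁻¹ / (∑ τ ∈ Finset.Icc 1 T, (‖g τ‖ ^ 2)⁻¹)) * f (x t)) - f xs := by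
      simp only [mul_sub]
      rw [Finset.sum_sub_distrib, ← Finset.sum_mul, hlsum, one_mul]
    have heq2 : ∑ t ∈ Finset.Icc 1 T,
        ((‖g t‖ ^ 2)⁻¹ / (∑ τ ∈ Finset.Icc 1 T, (‖g τ‖ ^ 2)⁻¹)) *
          (inner ℝ (g t) (x t - xs) : ℝ) =
        (∑ t ∈ Finset.Icc 1 T, (‖g t‖ ^ 2)⁻¹ * (inner ℝ (g t) (x t - xs) : ℝ)) /
          (∑ τ ∈ Finset.Icc 1 T, (‖g τ‖ ^ 2)⁻¹) := by
      rw [Finset.sum_div]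
      exact Finset.sum_congr rfl fun t _ => by rw [div_mul_eq_mul_div]
    have hdivle := (div_le_div_iff_of_pos_right hSTpos).mpr (hREG xs hxs)
    have hfrac : (Real.sqrt 2 * D * Real.sqrt (∑ τ ∈ Finset.Icc 1 T, (‖g τ‖ ^ 2)⁻¹)) /
        (∑ τ ∈ Finset.Icc 1 T, (‖g τ‖ ^ 2)⁻¹) =
        Real.sqrt (2 * D ^ 2) / Real.sqrt (∑ τ ∈ Finset.Icc 1 T, (‖g τ‖ ^ 2)⁻¹) := by
      rw [Real.sqrt_mul (by norm_num : (0:ℝ) ≤ 2) (D ^ 2), Real.sqrt_sq hD0]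
      have hss : Real.sqrt (∑ τ ∈ Finset.Icc 1 T, (‖g τ‖ ^ 2)⁻¹) *
          Real.sqrt (∑ τ ∈ Finset.Icc 1 T, (‖g τ‖ ^ 2)⁻¹) =
          ∑ τ ∈ Finset.Icc 1 T, (‖g τ‖ ^ 2)⁻¹ := Real.mul_self_sqrt hSTpos.le
      rw [div_eq_div_iff hSTpos.ne' hrT.ne']
      linear_combination (Real.sqrt 2 * D) * hss
    calc f xbar - f xs
        ≤ (∑ t ∈ Finset.Icc 1 T,
            ((‖g t‖ ^ 2)⁻¹ / (∑ τ ∈ Finset.Icc 1 T, (‖g τ‖ ^ 2)⁻¹)) * f (x t)) - f xs := by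
          linarith [hjensen]
      _ = ∑ t ∈ Finset.Icc 1 T,
            ((‖g t‖ ^ 2)⁻¹ / (∑ τ ∈ Finset.Icc 1 T, (‖g τ‖ ^ 2)⁻¹)) * (f (x t) - f xs) :=
          heq1.symm
      _ ≤ ∑ t ∈ Finset.Icc 1 T,
            ((‖g t‖ ^ 2)⁻¹ / (∑ τ ∈ Finset.Icc 1 T, (‖g τ‖ ^ 2)⁻¹)) *
              (inner ℝ (g t) (x t - xs) : ℝ) := hch
      _ = (∑ t ∈ Finset.Icc 1 T, (‖g t‖ ^ 2)⁻¹ * (inner ℝ (g t) (x t - xs) : ℝ)) /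
            (∑ τ ∈ Finset.Icc 1 T, (‖g τ‖ ^ 2)⁻¹) := heq2
      _ ≤ (Real.sqrt 2 * D * Real.sqrt (∑ τ ∈ Finset.Icc 1 T, (‖g τ‖ ^ 2)⁻¹)) /
            (∑ τ ∈ Finset.Icc 1 T, (‖g τ‖ ^ 2)⁻¹) := hdivle
      _ = Real.sqrt (2 * D ^ 2) / Real.sqrt (∑ τ ∈ Finset.Icc 1 T, (‖g τ‖ ^ 2)⁻¹) := hfrac
  · -- Part 2
    have h2β : (0:ℝ) < 2 * β := by linarith
    have hlow : ∀ t ∈ Finset.Icc 1 T,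
        (2 * β)⁻¹ ≤ (‖g t‖ ^ 2)⁻¹ * (inner ℝ (g t) (x t - xstar) : ℝ) := by
      intro t ht
      have hgb : ‖g t‖ ^ 2 ≤ 2 * β * (f (x t) - f xstar) := by
        rw [hg t]; exact hgrad (x t)
      have hgp : 0 < ‖g t‖ ^ 2 := pow_pos (norm_pos_iff.mpr (hgne t ht)) 2
      have hpt := hptconv t xstar
      have h1 : 1 ≤ (‖g t‖ ^ 2)⁻¹ * (2 * β * (f (x t) - f xstar)) := by
        rw [← inv_mul_cancel₀ hgp.ne']
        exact mul_le_mul_of_nonneg_left hgb (inv_nonneg.mpr hgp.le)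
      have e : (2 * β)⁻¹ * ((‖g t‖ ^ 2)⁻¹ * (2 * β * (f (x t) - f xstar))) =
          (‖g t‖ ^ 2)⁻¹ * (f (x t) - f xstar) := by
        field_simp
      have h2 := mul_le_mul_of_nonneg_left h1 (inv_nonneg.mpr h2β.le)
      rw [e, mul_one] at h2
      have h3 := mul_le_mul_of_nonneg_left hpt (hwnn t)
      linarith
    have hcount : ∑ _t ∈ Finset.Icc 1 T, ((2 * β)⁻¹ : ℝ) = T * (2 * β)⁻¹ := by
      rw [Finset.sum_const, Nat.card_Icc]
      simp [nsmul_eq_mul]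
    have hTlow : (T:ℝ) * (2 * β)⁻¹ ≤
        Real.sqrt 2 * D * Real.sqrt (∑ τ ∈ Finset.Icc 1 T, (‖g τ‖ ^ 2)⁻¹) := by
      rw [← hcount]
      exact le_trans (Finset.sum_le_sum hlow) (hREG xstar hxstarK)
    have hTpos : (0:ℝ) < T := by
      have : 0 < T := by omega
      exact_mod_cast this
    rw [Real.sqrt_mul (by norm_num : (0:ℝ) ≤ 2) (D ^ 2), Real.sqrt_sq hD0,
      div_le_div_iff₀ hrT hTpos]
    have h4 : (T:ℝ) ≤ 2 * β *
        (Real.sqrt 2 * D * Real.sqrt (∑ τ ∈ Finset.Icc 1 T, (‖g τ‖ ^ 2)⁻¹)) := by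
      have h5 := mul_le_mul_of_nonneg_left hTlow h2β.le
      have e : 2 * β * ((T:ℝ) * (2 * β)⁻¹) = (T:ℝ) := by
        field_simp
      rw [e] at h5
      exact h5
    have hs2sq : Real.sqrt 2 ^ 2 = 2 := Real.sq_sqrt (by norm_num)
    have hs2nn : (0:ℝ) ≤ Real.sqrt 2 := Real.sqrt_nonneg 2
    nlinarith [mul_le_mul_of_nonneg_left h4 (mul_nonneg hs2nn hD0), hs2sq,
      mul_pos (mul_pos hβpos (pow_pos hDpos 2)) hrT]
end

section
/- (SC-AdaNGD_1, general case.) Let H > 0, let f : ℝ^d → ℝ be differentiable and H-strongly convex with ‖∇f(x)‖ ≤ G for all x ∈ K, and let x_1, …, x_T and x̄_T be the SC-AdaNGD_k iterates and output with k = 1, with g_t := ∇f(x_t) ≠ 0 for all t = 1, …, T. Then f(x̄_T) − min_{x ∈ K} f(x) ≤ G·(1 + log(Σ_{t=1}^T G/‖g_t‖)) / (2H Σ_{t=1}^T 1/‖g_t‖) ≤ G²(1 + log T) / (2 H T). -/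
open Finset

lemma my_proj_nonexp {E : Type*} [NormedAddCommGroup E] [InnerProductSpace ℝ E]
    {K : Set E} (hKconv : Convex ℝ K)
    (proj : E → E) (hproj_mem : ∀ y, proj y ∈ K)
    (hproj_min : ∀ y, ∀ z ∈ K, ‖proj y - y‖ ≤ ‖z - y‖) :
    ∀ y, ∀ z ∈ K, ‖proj y - z‖ ≤ ‖y - z‖ := by
  intro y z hz
  have hmem := hproj_mem y
  haveI : Nonempty K := ⟨⟨proj y, hmem⟩⟩
  have hbdd : BddBelow (Set.range fun w : K => ‖y - (w : E)‖) := by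
    refine ⟨0, ?_⟩
    rintro _ ⟨w, rfl⟩
    exact norm_nonneg _
  have hinf : ‖y - proj y‖ = ⨅ w : K, ‖y - (w : E)‖ := by
    apply le_antisymm
    · apply le_ciInf
      intro w
      rw [norm_sub_rev y (proj y), norm_sub_rev y (w : E)]
      exact hproj_min y w w.2
    · exact ciInf_le hbdd ⟨proj y, hmem⟩
  have hVI := (norm_eq_iInf_iff_real_inner_le_zero hKconv hmem).mp hinf z hz
  have hexp : ‖y - z‖ ^ 2 = ‖y - proj y‖ ^ 2
      + 2 * (inner ℝ (y - proj y) (proj y - z) : ℝ) + ‖proj y - z‖ ^ 2 := by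
    have h := norm_add_sq_real (y - proj y) (proj y - z)
    have h2 : y - proj y + (proj y - z) = y - z := by abel
    rw [h2] at h
    linarith
  have hip : (0 : ℝ) ≤ (inner ℝ (y - proj y) (proj y - z) : ℝ) := by
    have h3 : (inner ℝ (y - proj y) (z - proj y) : ℝ) = -(inner ℝ (y - proj y) (proj y - z) : ℝ) := by
      rw [show z - proj y = -(proj y - z) by abel, inner_neg_right]
    rw [h3] at hVI
    linarith
  nlinarith [norm_nonneg (y - z), norm_nonneg (proj y - z), norm_nonneg (y - proj y)]

lemma my_logsum (G : ℝ) (hG : 0 < G) (a : ℕ → ℝ) :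
    ∀ T : ℕ, 1 ≤ T → (∀ t ∈ Finset.Icc 1 T, G⁻¹ ≤ a t) →
    (∑ t ∈ Finset.Icc 1 T, (∑ τ ∈ Finset.Icc 1 t, a τ)⁻¹)
      ≤ G * (1 + Real.log (G * ∑ τ ∈ Finset.Icc 1 T, a τ)) := by
  intro T
  induction T with
  | zero => intro h; omega
  | succ n ih =>
    intro _ ha
    have hposa : ∀ t ∈ Finset.Icc 1 (n+1), 0 < a t := fun t ht =>
      lt_of_lt_of_le (inv_pos.mpr hG) (ha t ht)
    rcases Nat.eq_zero_or_pos n with rfl | hn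
    · simp only [Finset.Icc_self, Finset.sum_singleton]
      have h1 : G⁻¹ ≤ a 1 := ha 1 (by simp)
      have ha1 : 0 < a 1 := hposa 1 (by simp)
      have hlog : (0:ℝ) ≤ Real.log (G * a 1) := by
        apply Real.log_nonneg
        rw [← mul_inv_cancel₀ hG.ne']
        exact mul_le_mul_of_nonneg_left h1 hG.le
      have : (a 1)⁻¹ ≤ G := by
        rw [inv_le_comm₀ ha1 hG]
        exact h1
      nlinarith
    · have hsub : ∀ t ∈ Finset.Icc 1 n, G⁻¹ ≤ a t := fun t ht => by
        refine ha t ?_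
        simp only [Finset.mem_Icc] at ht ⊢; omega
      have hih := ih hn hsub
      set Sn := ∑ τ ∈ Finset.Icc 1 n, a τ with hSn
      have hSnpos : 0 < Sn := by
        apply Finset.sum_pos
        · intro t ht
          refine lt_of_lt_of_le (inv_pos.mpr hG) (hsub t ht)
        · exact ⟨1, by simp [Finset.mem_Icc]; omega⟩
      have hstep : ∑ τ ∈ Finset.Icc 1 (n+1), a τ = Sn + a (n+1) :=
        Finset.sum_Icc_succ_top (by omega) a
      have han1 : 0 < a (n+1) := hposa (n+1) (by simp [Finset.mem_Icc])
      set S := Sn + a (n+1) with hS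
      have hSpos : 0 < S := by positivity
      have hkey : S⁻¹ ≤ G * (Real.log (G * S) - Real.log (G * Sn)) := by
        have hlog1 : Real.log (G * S) - Real.log (G * Sn) = Real.log S - Real.log Sn := by
          rw [Real.log_mul hG.ne' hSpos.ne', Real.log_mul hG.ne' hSnpos.ne']
          ring
        rw [hlog1]
        have h2 : Real.log (Sn / S) ≤ Sn / S - 1 := Real.log_le_sub_one_of_pos (by positivity)
        rw [Real.log_div hSnpos.ne' hSpos.ne'] at h2
        have h3 : a (n+1) / S ≤ Real.log S - Real.log Sn := by
          have h35 : 1 - Sn / S = a (n+1) / S := by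
            field_simp
            rw [hS]; ring
          linarith [h2, h35]
        have h4 : S⁻¹ ≤ G * (a (n+1) / S) := by
          rw [div_eq_mul_inv, ← mul_assoc]
          nth_rewrite 1 [show S⁻¹ = 1 * S⁻¹ by ring]
          apply mul_le_mul_of_nonneg_right _ (by positivity)
          rw [← mul_inv_cancel₀ hG.ne']
          exact mul_le_mul_of_nonneg_left (ha (n+1) (by simp [Finset.mem_Icc])) hG.le
        calc S⁻¹ ≤ G * (a (n+1) / S) := h4
          _ ≤ G * (Real.log S - Real.log Sn) := mul_le_mul_of_nonneg_left h3 hG.le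
      have hsplit : ∑ t ∈ Finset.Icc 1 (n+1), (∑ τ ∈ Finset.Icc 1 t, a τ)⁻¹
          = (∑ t ∈ Finset.Icc 1 n, (∑ τ ∈ Finset.Icc 1 t, a τ)⁻¹) + S⁻¹ := by
        rw [Finset.sum_Icc_succ_top (by omega : 1 ≤ n + 1)]
        rw [hstep]
      rw [hsplit, hstep]
      calc (∑ t ∈ Finset.Icc 1 n, (∑ τ ∈ Finset.Icc 1 t, a τ)⁻¹) + S⁻¹
          ≤ G * (1 + Real.log (G * Sn)) + G * (Real.log (G * S) - Real.log (G * Sn)) :=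
            add_le_add hih hkey
        _ = G * (1 + Real.log (G * S)) := by ring

lemma my_ratio {T u : ℝ} (hT : 1 ≤ T) (hu : T ≤ u) :
    (1 + Real.log u) / u ≤ (1 + Real.log T) / T := by
  have hT0 : 0 < T := by linarith
  have hu0 : 0 < u := by linarith
  rw [div_le_div_iff₀ hu0 hT0]
  have h1 : Real.log (u / T) ≤ u / T - 1 := Real.log_le_sub_one_of_pos (by positivity)
  rw [Real.log_div hu0.ne' hT0.ne'] at h1
  have h2 : T * Real.log u ≤ T * Real.log T + u - T := by
    have h25 := mul_le_mul_of_nonneg_left h1 hT0.le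
    have he : T * (u / T - 1) = u - T := by field_simp
    nlinarith
  have h3 : 0 ≤ Real.log T := Real.log_nonneg hT
  nlinarith

lemma my_sum_shift (F : ℕ → ℝ) (n : ℕ) :
    ∑ i ∈ Finset.range n, F (i+1) = ∑ t ∈ Finset.Icc 1 n, F t := by
  induction n with
  | zero => simp
  | succ m ih => rw [Finset.sum_range_succ, ih, Finset.sum_Icc_succ_top (by omega)]


set_option maxHeartbeats 1600000 in
theorem sc_adangd_one_general
    {d : ℕ} (T : ℕ) (hT : 1 ≤ T) (H G : ℝ) (hH : 0 < H)
    (K : Set (EuclideanSpace ℝ (Fin d)))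
    (hKne : K.Nonempty) (hKcl : IsClosed K) (hKbdd : Bornology.IsBounded K)
    (hKconv : Convex ℝ K)
    (proj : EuclideanSpace ℝ (Fin d) → EuclideanSpace ℝ (Fin d))
    (hproj_mem : ∀ y, proj y ∈ K)
    (hproj_min : ∀ y, ∀ z ∈ K, ‖proj y - y‖ ≤ ‖z - y‖)
    (f : EuclideanSpace ℝ (Fin d) → ℝ)
    (hdiff : Differentiable ℝ f)
    (hsc : ∀ x y, f x + (inner ℝ (gradient f x) (y - x) : ℝ) + (H / 2) * ‖x - y‖ ^ 2 ≤ f y)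
    (hG : ∀ x ∈ K, ‖gradient f x‖ ≤ G)
    (x : ℕ → EuclideanSpace ℝ (Fin d)) (g : ℕ → EuclideanSpace ℝ (Fin d)) (η : ℕ → ℝ)
    (hx1 : x 1 ∈ K)
    (hg : ∀ t, g t = gradient f (x t))
    (hgne : ∀ t ∈ Finset.Icc 1 T, g t ≠ 0)
    (hη : ∀ t, η t = 1 / (H * ∑ τ ∈ Finset.Icc 1 t, (‖g τ‖)⁻¹))
    (hupd : ∀ t ∈ Finset.Icc 1 T, x (t + 1) = proj (x t - (η t / ‖g t‖) • g t))
    (xbar : EuclideanSpace ℝ (Fin d))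
    (hxbar : xbar = ∑ t ∈ Finset.Icc 1 T, (((‖g t‖)⁻¹) / ∑ τ ∈ Finset.Icc 1 T, (‖g τ‖)⁻¹) • x t)
    :
    (∀ xs ∈ K,
      f xbar - f xs ≤
        G * (1 + Real.log (∑ t ∈ Finset.Icc 1 T, G / ‖g t‖)) /
          (2 * H * ∑ t ∈ Finset.Icc 1 T, (‖g t‖)⁻¹)) ∧
    G * (1 + Real.log (∑ t ∈ Finset.Icc 1 T, G / ‖g t‖)) /
        (2 * H * ∑ t ∈ Finset.Icc 1 T, (‖g t‖)⁻¹) ≤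
      G ^ 2 * (1 + Real.log T) / (2 * H * T) := by
  have hxK : ∀ t, 1 ≤ t → t ≤ T → x t ∈ K := by
    intro t
    induction t with
    | zero => intro h; omega
    | succ n ih =>
      intro h1 h2
      rcases Nat.eq_zero_or_pos n with rfl | hpos
      · exact hx1
      · rw [hupd n (Finset.mem_Icc.mpr ⟨hpos, by omega⟩)]
        exact hproj_mem _
  have hgpos : ∀ t ∈ Finset.Icc 1 T, 0 < ‖g t‖ := fun t ht => norm_pos_iff.mpr (hgne t ht)
  have hgleG : ∀ t ∈ Finset.Icc 1 T, ‖g t‖ ≤ G := by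
    intro t ht
    obtain ⟨h1, h2⟩ := Finset.mem_Icc.mp ht
    rw [hg t]
    exact hG (x t) (hxK t h1 h2)
  have h1T : (1 : ℕ) ∈ Finset.Icc 1 T := Finset.mem_Icc.mpr ⟨le_refl 1, hT⟩
  have hGpos : 0 < G := lt_of_lt_of_le (hgpos 1 h1T) (hgleG 1 h1T)
  have ha : ∀ t ∈ Finset.Icc 1 T, G⁻¹ ≤ (‖g t‖)⁻¹ := fun t ht =>
    inv_anti₀ (hgpos t ht) (hgleG t ht)
  have hSpos : ∀ t, 1 ≤ t → t ≤ T → 0 < ∑ τ ∈ Finset.Icc 1 t, (‖g τ‖)⁻¹ := by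
    intro t h1 h2
    apply Finset.sum_pos
    · intro τ hτ
      obtain ⟨hτ1, hτ2⟩ := Finset.mem_Icc.mp hτ
      exact inv_pos.mpr (hgpos τ (Finset.mem_Icc.mpr ⟨hτ1, le_trans hτ2 h2⟩))
    · exact ⟨1, Finset.mem_Icc.mpr ⟨le_refl 1, h1⟩⟩
  have hSTpos : 0 < ∑ τ ∈ Finset.Icc 1 T, (‖g τ‖)⁻¹ := hSpos T hT (le_refl T)
  set S : ℝ := ∑ τ ∈ Finset.Icc 1 T, (‖g τ‖)⁻¹ with hSdef
  have hGsum : ∑ t ∈ Finset.Icc 1 T, G / ‖g t‖ = G * ∑ τ ∈ Finset.Icc 1 T, (‖g τ‖)⁻¹ := by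
    rw [Finset.mul_sum]
    exact Finset.sum_congr rfl fun t _ => div_eq_mul_inv G _
  have hlogsum : (∑ t ∈ Finset.Icc 1 T, (∑ τ ∈ Finset.Icc 1 t, (‖g τ‖)⁻¹)⁻¹)
      ≤ G * (1 + Real.log (G * ∑ τ ∈ Finset.Icc 1 T, (‖g τ‖)⁻¹)) :=
    my_logsum G hGpos (fun t => (‖g t‖)⁻¹) T hT ha
  constructor
  · intro xs hxs
    set ψ : ℕ → ℝ := fun n =>
      (H/2) * ((∑ τ ∈ Finset.Icc 1 n, (‖g τ‖)⁻¹) * ‖x (n+1) - xs‖^2) with hψ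
    have key : ∀ i ∈ Finset.range T,
        (‖g (i+1)‖)⁻¹ * (f (x (i+1)) - f xs)
          ≤ (ψ i - ψ (i+1)) + (2*H*(∑ τ ∈ Finset.Icc 1 (i+1), (‖g τ‖)⁻¹))⁻¹ := by
      intro i hi
      have hiT : i + 1 ∈ Finset.Icc 1 T :=
        Finset.mem_Icc.mpr ⟨by omega, by have := Finset.mem_range.mp hi; omega⟩
      obtain ⟨hi1, hi2⟩ := Finset.mem_Icc.mp hiT
      have hng : 0 < ‖g (i+1)‖ := hgpos _ hiT
      simp only [hψ]
      set s := ∑ τ ∈ Finset.Icc 1 (i+1), (‖g τ‖)⁻¹ with hsdef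
      have hs : 0 < s := hSpos _ hi1 hi2
      have hsplit : s = (∑ τ ∈ Finset.Icc 1 i, (‖g τ‖)⁻¹) + (‖g (i+1)‖)⁻¹ :=
        Finset.sum_Icc_succ_top (by omega) _
      have hnonexp := my_proj_nonexp hKconv proj hproj_mem hproj_min
        (x (i+1) - (η (i+1) / ‖g (i+1)‖) • g (i+1)) xs hxs
      rw [← hupd (i+1) hiT] at hnonexp
      have hsq : ‖x (i+1+1) - xs‖^2
          ≤ ‖(x (i+1) - xs) - (η (i+1) / ‖g (i+1)‖) • g (i+1)‖^2 := by
        have h2 : x (i+1) - (η (i+1) / ‖g (i+1)‖) • g (i+1) - xs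
            = (x (i+1) - xs) - (η (i+1) / ‖g (i+1)‖) • g (i+1) := by
          abel
        rw [← h2]
        exact pow_le_pow_left₀ (norm_nonneg _) hnonexp 2
      have hexp : ‖(x (i+1) - xs) - (η (i+1) / ‖g (i+1)‖) • g (i+1)‖^2
          = ‖x (i+1) - xs‖^2
            - 2*((η (i+1) / ‖g (i+1)‖) * (inner ℝ (g (i+1)) (x (i+1) - xs) : ℝ))
            + (η (i+1) / ‖g (i+1)‖)^2 * ‖g (i+1)‖^2 := by
        rw [norm_sub_sq_real, real_inner_smul_right, norm_smul, real_inner_comm]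
        simp only [Real.norm_eq_abs, sq_abs, mul_pow]
      rw [hexp] at hsq
      have hscv := hsc (x (i+1)) xs
      rw [← hg (i+1)] at hscv
      rw [show xs - x (i+1) = -(x (i+1) - xs) by abel, inner_neg_right] at hscv
      have hγs : H * s * (η (i+1) / ‖g (i+1)‖) = (‖g (i+1)‖)⁻¹ := by
        rw [hη (i+1), ← hsdef]
        field_simp
      have hγsq : (H*s/2) * ((η (i+1) / ‖g (i+1)‖)^2 * ‖g (i+1)‖^2) = (2*H*s)⁻¹ := by
        rw [hη (i+1), ← hsdef]
        field_simp
      have hmul := mul_le_mul_of_nonneg_left hsq (show (0:ℝ) ≤ H*s/2 from le_of_lt (by nlinarith))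
      have hre : (H*s/2) * (‖x (i+1) - xs‖^2
            - 2*((η (i+1) / ‖g (i+1)‖) * (inner ℝ (g (i+1)) (x (i+1) - xs) : ℝ))
            + (η (i+1) / ‖g (i+1)‖)^2 * ‖g (i+1)‖^2)
          = (H*s/2) * ‖x (i+1) - xs‖^2
            - (H * s * (η (i+1) / ‖g (i+1)‖)) * (inner ℝ (g (i+1)) (x (i+1) - xs) : ℝ)
            + (H*s/2) * ((η (i+1) / ‖g (i+1)‖)^2 * ‖g (i+1)‖^2) := by
        ring
      rw [hre, hγs, hγsq] at hmul
      have hB : f (x (i+1)) - f xs + (H/2) * ‖x (i+1) - xs‖^2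
          ≤ (inner ℝ (g (i+1)) (x (i+1) - xs) : ℝ) := by linarith
      have hBm := mul_le_mul_of_nonneg_left hB (inv_nonneg.mpr hng.le)
      have eq1 : (H/2) * ((∑ τ ∈ Finset.Icc 1 i, (‖g τ‖)⁻¹) * ‖x (i+1) - xs‖^2)
          = (H*s/2) * ‖x (i+1) - xs‖^2
            - (H/2) * ((‖g (i+1)‖)⁻¹ * ‖x (i+1) - xs‖^2) := by
        rw [hsplit]
        ring
      nlinarith [hmul, hBm, eq1]
    have hsum := Finset.sum_le_sum key
    rw [Finset.sum_add_distrib, Finset.sum_range_sub' ψ] at hsum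
    have hψ0 : ψ 0 = 0 := by
      have hIcc : Finset.Icc 1 0 = (∅ : Finset ℕ) := by
        apply Finset.Icc_eq_empty
        omega
      simp only [hψ, hIcc, Finset.sum_empty, zero_mul, mul_zero]
    have hψT : 0 ≤ ψ T := by
      simp only [hψ]
      apply mul_nonneg (by linarith)
      exact mul_nonneg (Finset.sum_nonneg fun τ _ => inv_nonneg.mpr (norm_nonneg _))
        (sq_nonneg _)
    have hL : ∑ i ∈ Finset.range T, (‖g (i+1)‖)⁻¹ * (f (x (i+1)) - f xs)
        = ∑ t ∈ Finset.Icc 1 T, (‖g t‖)⁻¹ * (f (x t) - f xs) :=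
      my_sum_shift (fun t => (‖g t‖)⁻¹ * (f (x t) - f xs)) T
    have hR : ∑ i ∈ Finset.range T, (2*H*(∑ τ ∈ Finset.Icc 1 (i+1), (‖g τ‖)⁻¹))⁻¹
        = ∑ t ∈ Finset.Icc 1 T, (2*H*(∑ τ ∈ Finset.Icc 1 t, (‖g τ‖)⁻¹))⁻¹ :=
      my_sum_shift (fun t => (2*H*(∑ τ ∈ Finset.Icc 1 t, (‖g τ‖)⁻¹))⁻¹) T
    rw [hL, hR] at hsum
    have hLsplit : ∑ t ∈ Finset.Icc 1 T, (‖g t‖)⁻¹ * (f (x t) - f xs)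
        = (∑ t ∈ Finset.Icc 1 T, (‖g t‖)⁻¹ * f (x t)) - S * f xs := by
      rw [hSdef, Finset.sum_mul, ← Finset.sum_sub_distrib]
      exact Finset.sum_congr rfl fun t _ => by ring
    have hc : ∑ t ∈ Finset.Icc 1 T, (2*H*(∑ τ ∈ Finset.Icc 1 t, (‖g τ‖)⁻¹))⁻¹
        = (2*H)⁻¹ * ∑ t ∈ Finset.Icc 1 T, (∑ τ ∈ Finset.Icc 1 t, (‖g τ‖)⁻¹)⁻¹ := by
      rw [Finset.mul_sum]
      exact Finset.sum_congr rfl fun t _ => mul_inv (2*H) _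
    rw [hLsplit, hc] at hsum
    have hmain : (∑ t ∈ Finset.Icc 1 T, (‖g t‖)⁻¹ * f (x t)) - S * f xs
        ≤ (2*H)⁻¹ * ∑ t ∈ Finset.Icc 1 T, (∑ τ ∈ Finset.Icc 1 t, (‖g τ‖)⁻¹)⁻¹ := by
      linarith
    -- Jensen step
    have hwsum : ∑ t ∈ Finset.Icc 1 T, (‖g t‖)⁻¹ / S = 1 := by
      rw [← Finset.sum_div, ← hSdef, div_self hSTpos.ne']
    have hvec : ∑ t ∈ Finset.Icc 1 T, ((‖g t‖)⁻¹ / S) • (x t - xbar) = 0 := by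
      simp only [smul_sub]
      rw [Finset.sum_sub_distrib, ← Finset.sum_smul, hwsum, one_smul, ← hxbar, sub_self]
    have h1 : ∀ t ∈ Finset.Icc 1 T,
        ((‖g t‖)⁻¹/S) * f xbar
          + ((‖g t‖)⁻¹/S) * (inner ℝ (gradient f xbar) (x t - xbar) : ℝ)
          ≤ ((‖g t‖)⁻¹/S) * f (x t) := by
      intro t ht
      have h2 := hsc xbar (x t)
      have hw : (0:ℝ) ≤ (‖g t‖)⁻¹/S := div_nonneg (inv_nonneg.mpr (norm_nonneg _)) hSTpos.le
      have h4 : 0 ≤ (H/2) * ‖xbar - x t‖^2 := mul_nonneg (by linarith) (sq_nonneg _)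
      have h3 : f xbar + (inner ℝ (gradient f xbar) (x t - xbar) : ℝ) ≤ f (x t) := by
        linarith
      nlinarith [mul_le_mul_of_nonneg_left h3 hw]
    have h5 := Finset.sum_le_sum h1
    rw [Finset.sum_add_distrib] at h5
    have h6 : ∑ t ∈ Finset.Icc 1 T, ((‖g t‖)⁻¹/S) * f xbar = f xbar := by
      rw [← Finset.sum_mul, hwsum, one_mul]
    have h7 : ∑ t ∈ Finset.Icc 1 T,
        ((‖g t‖)⁻¹/S) * (inner ℝ (gradient f xbar) (x t - xbar) : ℝ) = 0 := by
      calc ∑ t ∈ Finset.Icc 1 T,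
            ((‖g t‖)⁻¹/S) * (inner ℝ (gradient f xbar) (x t - xbar) : ℝ)
          = ∑ t ∈ Finset.Icc 1 T,
            (inner ℝ (gradient f xbar) (((‖g t‖)⁻¹/S) • (x t - xbar)) : ℝ) :=
            Finset.sum_congr rfl fun t _ => (real_inner_smul_right _ _ _).symm
        _ = (inner ℝ (gradient f xbar)
              (∑ t ∈ Finset.Icc 1 T, ((‖g t‖)⁻¹/S) • (x t - xbar)) : ℝ) :=
            (inner_sum _ _ _).symm
        _ = 0 := by rw [hvec, inner_zero_right]
    have hJ : f xbar ≤ ∑ t ∈ Finset.Icc 1 T, ((‖g t‖)⁻¹/S) * f (x t) := by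
      rw [h6, h7] at h5
      linarith
    have h8 : ∑ t ∈ Finset.Icc 1 T, ((‖g t‖)⁻¹ / S) * f (x t)
        = S⁻¹ * ∑ t ∈ Finset.Icc 1 T, (‖g t‖)⁻¹ * f (x t) := by
      rw [Finset.mul_sum]
      exact Finset.sum_congr rfl fun t _ => by ring
    rw [hGsum]
    have e3 : S⁻¹ * ((2*H)⁻¹ * (G * (1 + Real.log (G*S))))
        = G * (1 + Real.log (G*S)) / (2*H*S) := by
      rw [div_eq_mul_inv, show (2*H*S)⁻¹ = (2*H)⁻¹ * S⁻¹ from mul_inv _ _]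
      ring
    calc f xbar - f xs
        ≤ (∑ t ∈ Finset.Icc 1 T, ((‖g t‖)⁻¹ / S) * f (x t)) - f xs := by linarith
      _ = S⁻¹ * ((∑ t ∈ Finset.Icc 1 T, (‖g t‖)⁻¹ * f (x t)) - S * f xs) := by
          rw [h8]
          field_simp
      _ ≤ S⁻¹ * ((2*H)⁻¹ * ∑ t ∈ Finset.Icc 1 T, (∑ τ ∈ Finset.Icc 1 t, (‖g τ‖)⁻¹)⁻¹) :=
          mul_le_mul_of_nonneg_left hmain (inv_nonneg.mpr hSTpos.le)
      _ ≤ S⁻¹ * ((2*H)⁻¹ * (G * (1 + Real.log (G*S)))) := by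
          apply mul_le_mul_of_nonneg_left _ (inv_nonneg.mpr hSTpos.le)
          exact mul_le_mul_of_nonneg_left hlogsum (inv_nonneg.mpr (by linarith))
      _ = G * (1 + Real.log (G*S)) / (2*H*S) := e3
  · rw [hGsum]
    have hcard : (∑ t ∈ Finset.Icc 1 T, G⁻¹) = (T : ℝ) * G⁻¹ := by
      rw [Finset.sum_const, Nat.card_Icc]
      simp [nsmul_eq_mul]
    have hTle : (T:ℝ) * G⁻¹ ≤ ∑ τ ∈ Finset.Icc 1 T, (‖g τ‖)⁻¹ := by
      rw [← hcard]
      exact Finset.sum_le_sum ha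
    have hT1 : (1:ℝ) ≤ (T:ℝ) := by exact_mod_cast hT
    have hTu : (T:ℝ) ≤ G * ∑ τ ∈ Finset.Icc 1 T, (‖g τ‖)⁻¹ := by
      calc (T:ℝ) = G * ((T:ℝ) * G⁻¹) := by field_simp
        _ ≤ G * ∑ τ ∈ Finset.Icc 1 T, (‖g τ‖)⁻¹ := mul_le_mul_of_nonneg_left hTle hGpos.le
    have hrat := my_ratio hT1 hTu
    have hT0 : (0:ℝ) < (T:ℝ) := by linarith
    have e1 : G * (1 + Real.log (G * S)) / (2 * H * S)
        = (G^2/(2*H)) * ((1 + Real.log (G * S)) / (G * S)) := by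
      field_simp
    have e2 : G^2 * (1 + Real.log (T:ℝ)) / (2 * H * (T:ℝ))
        = (G^2/(2*H)) * ((1 + Real.log (T:ℝ)) / (T:ℝ)) := by
      field_simp
    rw [e1, e2]
    exact mul_le_mul_of_nonneg_left hrat (div_nonneg (sq_nonneg G) (by linarith))
end

section
/- (SC-AdaNGD_1, smooth case.) Let H > 0, let f : ℝ^d → ℝ be differentiable, H-strongly convex and β-smooth with ‖∇f(x)‖ ≤ G for all x ∈ K, and suppose the global minimizer x* := argmin_{x ∈ ℝ^d} f(x) belongs to K. Let x_1, …, x_T and x̄_T be the SC-AdaNGD_k iterates and output with k = 1, with g_t := ∇f(x_t) ≠ 0 for all t = 1, …, T. Then f(x̄_T) − min_{x ∈ K} f(x) ≤ (β/H) · G² (1 + log T)² / (H T²). -/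
lemma proj_sq_le {F : Type*} [NormedAddCommGroup F] [InnerProductSpace ℝ F]
    (K : Set F) (hKconv : Convex ℝ K)
    (proj : F → F)
    (hproj_mem : ∀ y, proj y ∈ K)
    (hproj_min : ∀ y, ∀ z ∈ K, ‖proj y - y‖ ≤ ‖z - y‖)
    (u z : F) (hz : z ∈ K) :
    ‖proj u - z‖^2 ≤ ‖u - z‖^2 := by
  haveI : Nonempty K := ⟨⟨proj u, hproj_mem u⟩⟩
  have heq : ‖u - proj u‖ = ⨅ w : K, ‖u - w‖ := by
    refine le_antisymm (le_ciInf fun w => ?_)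
      (ciInf_le (f := fun w : K => ‖u - w‖) ⟨0, by rintro _ ⟨_, rfl⟩; exact norm_nonneg _⟩ ⟨proj u, hproj_mem u⟩)
    rw [norm_sub_rev]
    exact (hproj_min u w w.2).trans (le_of_eq (norm_sub_rev _ _))
  have hinner := (norm_eq_iInf_iff_real_inner_le_zero hKconv (hproj_mem u)).mp heq
  have h0 : (inner ℝ (u - proj u) (z - proj u) : ℝ) ≤ 0 := hinner z hz
  have hid : u - z = (u - proj u) + (proj u - z) := by abel
  have h1 : (inner ℝ (u - proj u) (proj u - z) : ℝ) = - (inner ℝ (u - proj u) (z - proj u) : ℝ) := by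
    rw [show proj u - z = -(z - proj u) by abel, inner_neg_right]
  rw [hid, norm_add_sq_real]
  nlinarith [sq_nonneg ‖u - proj u‖]

set_option maxHeartbeats 2000000 in
theorem sc_adangd_one_smooth
    {d : ℕ} (T : ℕ) (hT : 1 ≤ T) (H G β : ℝ) (hH : 0 < H)
    (K : Set (EuclideanSpace ℝ (Fin d)))
    (hKne : K.Nonempty) (hKcl : IsClosed K) (hKbdd : Bornology.IsBounded K)
    (hKconv : Convex ℝ K)
    (proj : EuclideanSpace ℝ (Fin d) → EuclideanSpace ℝ (Fin d))
    (hproj_mem : ∀ y, proj y ∈ K)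
    (hproj_min : ∀ y, ∀ z ∈ K, ‖proj y - y‖ ≤ ‖z - y‖)
    (f : EuclideanSpace ℝ (Fin d) → ℝ)
    (hdiff : Differentiable ℝ f)
    (hsc : ∀ x y, f x + (inner ℝ (gradient f x) (y - x) : ℝ) + (H / 2) * ‖x - y‖ ^ 2 ≤ f y)
    (hsmooth : ∀ x y, f y ≤ f x + (inner ℝ (gradient f x) (y - x) : ℝ) + (β / 2) * ‖x - y‖ ^ 2)
    (hG : ∀ x ∈ K, ‖gradient f x‖ ≤ G)
    (xstar : EuclideanSpace ℝ (Fin d)) (hxstarK : xstar ∈ K)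
    (hmin : ∀ y, f xstar ≤ f y)
    (x : ℕ → EuclideanSpace ℝ (Fin d)) (g : ℕ → EuclideanSpace ℝ (Fin d)) (η : ℕ → ℝ)
    (hx1 : x 1 ∈ K)
    (hg : ∀ t, g t = gradient f (x t))
    (hgne : ∀ t ∈ Finset.Icc 1 T, g t ≠ 0)
    (hη : ∀ t, η t = 1 / (H * ∑ τ ∈ Finset.Icc 1 t, (‖g τ‖)⁻¹))
    (hupd : ∀ t ∈ Finset.Icc 1 T, x (t + 1) = proj (x t - (η t / ‖g t‖) • g t))
    (xbar : EuclideanSpace ℝ (Fin d))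
    (hxbar : xbar = ∑ t ∈ Finset.Icc 1 T, (((‖g t‖)⁻¹) / ∑ τ ∈ Finset.Icc 1 T, (‖g τ‖)⁻¹) • x t)
    :
    ∀ xs ∈ K,
      f xbar - f xs ≤ (β / H) * G ^ 2 * (1 + Real.log T) ^ 2 / (H * T ^ 2) := by
  intro xs hxs
  have hgpos : ∀ t ∈ Finset.Icc 1 T, (0:ℝ) < ‖g t‖ := fun t ht =>
    norm_pos_iff.mpr (hgne t ht)
  have hwpos : ∀ t ∈ Finset.Icc 1 T, (0:ℝ) < (‖g t‖)⁻¹ := fun t ht =>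
    inv_pos.mpr (hgpos t ht)
  have hmem1T : ∀ t, 1 ≤ t → t ≤ T → t ∈ Finset.Icc 1 T := fun t h1 h2 =>
    Finset.mem_Icc.mpr ⟨h1, h2⟩
  have hSpos : ∀ t ∈ Finset.Icc 1 T, (0:ℝ) < ∑ τ ∈ Finset.Icc 1 t, (‖g τ‖)⁻¹ := by
    intro t ht
    obtain ⟨h1, h2⟩ := Finset.mem_Icc.mp ht
    refine Finset.sum_pos (fun τ hτ => ?_) (Finset.nonempty_Icc.mpr h1)
    obtain ⟨hτ1, hτ2⟩ := Finset.mem_Icc.mp hτ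
    exact hwpos τ (hmem1T τ hτ1 (hτ2.trans h2))
  have hηpos : ∀ t ∈ Finset.Icc 1 T, 0 < η t := by
    intro t ht; rw [hη t]
    exact one_div_pos.mpr (mul_pos hH (hSpos t ht))
  have hη_eq : ∀ t ∈ Finset.Icc 1 T, η t * (H * ∑ τ ∈ Finset.Icc 1 t, (‖g τ‖)⁻¹) = 1 := by
    intro t ht
    rw [hη t, one_div, inv_mul_cancel₀ (ne_of_gt (mul_pos hH (hSpos t ht)))]
  -- membership of the iterates in K
  have hmemK : ∀ t, 1 ≤ t → t ≤ T → x t ∈ K := by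
    intro t h1 h2
    rcases t with _ | s
    · omega
    rcases s with _ | s
    · exact hx1
    · rw [hupd (s+1) (hmem1T _ (by omega) (by omega))]
      exact hproj_mem _
  have hGnorm : ∀ t ∈ Finset.Icc 1 T, ‖g t‖ ≤ G := by
    intro t ht
    obtain ⟨h1, h2⟩ := Finset.mem_Icc.mp ht
    rw [hg t]; exact hG (x t) (hmemK t h1 h2)
  have hGpos : 0 < G :=
    lt_of_lt_of_le (hgpos 1 (hmem1T 1 le_rfl hT)) (hGnorm 1 (hmem1T 1 le_rfl hT))
  -- β ≥ H > 0
  have hβH : H ≤ β := by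
    have h1 := hsc (x 1) (x 1 + g 1)
    have h2 := hsmooth (x 1) (x 1 + g 1)
    have h3 : ‖x 1 - (x 1 + g 1)‖ ^ 2 = ‖g 1‖ ^ 2 := by
      rw [show x 1 - (x 1 + g 1) = -(g 1) from by abel, norm_neg]
    rw [h3] at h1 h2
    have h4 : 0 < ‖g 1‖ ^ 2 := pow_pos (hgpos 1 (hmem1T 1 le_rfl hT)) 2
    nlinarith
  have hβpos : 0 < β := lt_of_lt_of_le hH hβH
  -- smoothness consequence : ‖g t‖² ≤ 2β (f (x t) - f x*)
  have hgsq : ∀ t ∈ Finset.Icc 1 T, ‖g t‖ ^ 2 ≤ 2 * β * (f (x t) - f xstar) := by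
    intro t ht
    have h1 := hsmooth (x t) (x t - β⁻¹ • g t)
    rw [← hg t] at h1
    have e1 : x t - β⁻¹ • g t - x t = -(β⁻¹ • g t) := by abel
    have e2 : (inner ℝ (g t) (-(β⁻¹ • g t)) : ℝ) = -(β⁻¹ * ‖g t‖ ^ 2) := by
      rw [inner_neg_right, real_inner_smul_right, real_inner_self_eq_norm_sq]
    have e3 : ‖x t - (x t - β⁻¹ • g t)‖ ^ 2 = β⁻¹ ^ 2 * ‖g t‖ ^ 2 := by
      rw [show x t - (x t - β⁻¹ • g t) = β⁻¹ • g t from by abel, norm_smul, mul_pow,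
        Real.norm_eq_abs, sq_abs]
    rw [e1, e2, e3] at h1
    have h2 := hmin (x t - β⁻¹ • g t)
    have h4 : β⁻¹ * ‖g t‖ ^ 2 - β / 2 * (β⁻¹ ^ 2 * ‖g t‖ ^ 2) = β⁻¹ / 2 * ‖g t‖ ^ 2 := by
      field_simp
      ring
    have h5 : β⁻¹ / 2 * ‖g t‖ ^ 2 ≤ f (x t) - f xstar := by linarith
    have h6 : 2 * β * (β⁻¹ / 2 * ‖g t‖ ^ 2) = ‖g t‖ ^ 2 := by
      field_simp
    calc ‖g t‖ ^ 2 = 2 * β * (β⁻¹ / 2 * ‖g t‖ ^ 2) := h6.symm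
      _ ≤ 2 * β * (f (x t) - f xstar) := by
          exact mul_le_mul_of_nonneg_left h5 (by positivity)
  -- the telescoping potential
  set b : ℕ → ℝ :=
    fun s => H * (∑ τ ∈ Finset.Icc 1 s, (‖g τ‖)⁻¹) / 2 * ‖x (s+1) - xstar‖ ^ 2 with hb
  -- per-step inequality
  have hstep : ∀ t ∈ Finset.Icc 1 T,
      (‖g t‖)⁻¹ * (f (x t) - f xstar) ≤ b (t-1) - b t + η t / 2 := by
    intro t ht
    obtain ⟨ht1, ht2⟩ := Finset.mem_Icc.mp ht
    have hgp := hgpos t ht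
    have hwp := hwpos t ht
    have hηp := hηpos t ht
    have hSp := hSpos t ht
    have hηe := hη_eq t ht
    have hns : ‖(η t / ‖g t‖) • g t‖ = η t := by
      rw [norm_smul, Real.norm_eq_abs, abs_of_nonneg (div_pos hηp hgp).le,
        div_mul_cancel₀ _ (ne_of_gt hgp)]
    have hq1 : ‖x (t+1) - xstar‖ ^ 2 ≤ ‖(x t - (η t / ‖g t‖) • g t) - xstar‖ ^ 2 := by
      rw [hupd t ht]
      exact proj_sq_le K hKconv proj hproj_mem hproj_min _ xstar hxstarK
    have hq2 : ‖(x t - (η t / ‖g t‖) • g t) - xstar‖ ^ 2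
        = ‖x t - xstar‖ ^ 2
          - 2 * (η t * (‖g t‖)⁻¹) * (inner ℝ (x t - xstar) (g t) : ℝ) + η t ^ 2 := by
      rw [show (x t - (η t / ‖g t‖) • g t) - xstar = (x t - xstar) - (η t / ‖g t‖) • g t
          from by abel,
        norm_sub_sq_real, real_inner_smul_right, hns, div_eq_mul_inv]
      ring
    have hcomb := hq1.trans hq2.le
    have hd : f (x t) - f xstar + H / 2 * ‖x t - xstar‖ ^ 2
        ≤ (inner ℝ (x t - xstar) (g t) : ℝ) := by
      have h1 := hsc (x t) xstar
      rw [← hg t] at h1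
      have e : (inner ℝ (g t) (xstar - x t) : ℝ) = -(inner ℝ (x t - xstar) (g t) : ℝ) := by
        rw [show xstar - x t = -(x t - xstar) from by abel, inner_neg_right, real_inner_comm]
      rw [e] at h1
      linarith
    obtain ⟨s, rfl⟩ : ∃ s, t = s + 1 := ⟨t - 1, by omega⟩
    have hsplit : (∑ τ ∈ Finset.Icc 1 (s+1), (‖g τ‖)⁻¹)
        = (∑ τ ∈ Finset.Icc 1 s, (‖g τ‖)⁻¹) + (‖g (s+1)‖)⁻¹ :=
      Finset.sum_Icc_succ_top (by omega) _
    simp only [hb, Nat.add_sub_cancel]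
    have hSnn : (0:ℝ) ≤ H * (∑ τ ∈ Finset.Icc 1 (s+1), (‖g τ‖)⁻¹) / 2 :=
      div_nonneg (mul_nonneg hH.le hSp.le) (by norm_num)
    have h3 := mul_le_mul_of_nonneg_left hcomb hSnn
    have h4 : H * (∑ τ ∈ Finset.Icc 1 (s+1), (‖g τ‖)⁻¹) / 2 * (‖x (s+1) - xstar‖ ^ 2
            - 2 * (η (s+1) * (‖g (s+1)‖)⁻¹)
              * (inner ℝ (x (s+1) - xstar) (g (s+1)) : ℝ) + η (s+1) ^ 2)
        = H * (∑ τ ∈ Finset.Icc 1 (s+1), (‖g τ‖)⁻¹) / 2 * ‖x (s+1) - xstar‖ ^ 2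
          - (η (s+1) * (H * (∑ τ ∈ Finset.Icc 1 (s+1), (‖g τ‖)⁻¹)))
              * ((‖g (s+1)‖)⁻¹ * (inner ℝ (x (s+1) - xstar) (g (s+1)) : ℝ))
          + (η (s+1) * (H * (∑ τ ∈ Finset.Icc 1 (s+1), (‖g τ‖)⁻¹))) * η (s+1) / 2 := by
      ring
    rw [h4, hηe] at h3
    have h5 := mul_le_mul_of_nonneg_left hd hwp.le
    have h6 : H * (∑ τ ∈ Finset.Icc 1 (s+1), (‖g τ‖)⁻¹) / 2 * ‖x (s+1) - xstar‖ ^ 2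
        = H * (∑ τ ∈ Finset.Icc 1 s, (‖g τ‖)⁻¹) / 2 * ‖x (s+1) - xstar‖ ^ 2
          + H * (‖g (s+1)‖)⁻¹ / 2 * ‖x (s+1) - xstar‖ ^ 2 := by
      rw [hsplit]; ring
    linarith
  -- telescoping
  have hb0 : b 0 = 0 := by simp [hb]
  have hbnonneg : ∀ s, 0 ≤ b s := by
    intro s
    apply mul_nonneg _ (sq_nonneg _)
    have : (0:ℝ) ≤ ∑ τ ∈ Finset.Icc 1 s, (‖g τ‖)⁻¹ :=
      Finset.sum_nonneg fun τ _ => inv_nonneg.mpr (norm_nonneg _)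
    positivity
  have htel : ∑ t ∈ Finset.Icc 1 T, (b (t-1) - b t) = b 0 - b T := by
    have hrs := Finset.sum_range_sub' b T
    rw [← hrs, ← Finset.Ico_add_one_right_eq_Icc, Finset.sum_Ico_eq_sum_range]
    refine Finset.sum_congr (by norm_num) fun i _ => ?_
    have e1 : 1 + i - 1 = i := by omega
    have e2 : 1 + i = i + 1 := by omega
    rw [e1, e2]
  have hregret : ∑ t ∈ Finset.Icc 1 T, (‖g t‖)⁻¹ * (f (x t) - f xstar)
      ≤ (∑ t ∈ Finset.Icc 1 T, η t) / 2 := by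
    have h1 : ∑ t ∈ Finset.Icc 1 T, (‖g t‖)⁻¹ * (f (x t) - f xstar)
        ≤ ∑ t ∈ Finset.Icc 1 T, ((b (t-1) - b t) + η t / 2) :=
      Finset.sum_le_sum hstep
    rw [Finset.sum_add_distrib, htel, hb0, ← Finset.sum_div] at h1
    have := hbnonneg T
    linarith
  -- harmonic-sum bound
  have hharm : ∑ t ∈ Finset.Icc 1 T, ((t:ℝ))⁻¹ ≤ 1 + Real.log T := by
    have h := harmonic_le_one_add_log T
    rw [harmonic_eq_sum_Icc] at h
    have hc : ((∑ i ∈ Finset.Icc 1 T, ((i:ℚ))⁻¹ : ℚ) : ℝ)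
        = ∑ i ∈ Finset.Icc 1 T, ((i:ℝ))⁻¹ := by
      push_cast
      rfl
    rwa [hc] at h
  have hηbound : ∀ t ∈ Finset.Icc 1 T, η t ≤ G / H * ((t:ℝ))⁻¹ := by
    intro t ht
    obtain ⟨ht1, ht2⟩ := Finset.mem_Icc.mp ht
    have htpos : (0:ℝ) < (t:ℝ) := by exact_mod_cast ht1
    have hSl : (t:ℝ) * G⁻¹ ≤ ∑ τ ∈ Finset.Icc 1 t, (‖g τ‖)⁻¹ := by
      have hcard : (Finset.Icc 1 t).card = t := by rw [Nat.card_Icc]; omega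
      have hle : ∀ τ ∈ Finset.Icc 1 t, G⁻¹ ≤ (‖g τ‖)⁻¹ := by
        intro τ hτ
        obtain ⟨h1, h2⟩ := Finset.mem_Icc.mp hτ
        exact inv_anti₀ (hgpos τ (hmem1T τ h1 (h2.trans ht2)))
          (hGnorm τ (hmem1T τ h1 (h2.trans ht2)))
      have := Finset.card_nsmul_le_sum (Finset.Icc 1 t) (fun τ => (‖g τ‖)⁻¹) G⁻¹ hle
      rw [hcard] at this
      simpa [nsmul_eq_mul] using this
    rw [hη t]
    have h2 : (0:ℝ) < H * ((t:ℝ) * G⁻¹) := by positivity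
    calc 1 / (H * ∑ τ ∈ Finset.Icc 1 t, (‖g τ‖)⁻¹)
        ≤ 1 / (H * ((t:ℝ) * G⁻¹)) := by
          apply one_div_le_one_div_of_le h2
          exact mul_le_mul_of_nonneg_left hSl hH.le
      _ = G / H * ((t:ℝ))⁻¹ := by
          field_simp
  have hA : (∑ t ∈ Finset.Icc 1 T, η t) / 2 ≤ G * (1 + Real.log T) / (2 * H) := by
    have h1 : ∑ t ∈ Finset.Icc 1 T, η t
        ≤ ∑ t ∈ Finset.Icc 1 T, G / H * ((t:ℝ))⁻¹ := Finset.sum_le_sum hηbound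
    rw [← Finset.mul_sum] at h1
    have h2 : G / H * ∑ t ∈ Finset.Icc 1 T, ((t:ℝ))⁻¹ ≤ G / H * (1 + Real.log T) :=
      mul_le_mul_of_nonneg_left hharm (by positivity)
    have h3 : G * (1 + Real.log T) / (2 * H) = G / H * (1 + Real.log T) / 2 := by
      field_simp
    rw [h3]
    linarith
  -- the weighted suboptimality sum
  set B := ∑ t ∈ Finset.Icc 1 T, (‖g t‖)⁻¹ * (f (x t) - f xstar) with hBdef
  have hBnonneg : 0 ≤ B :=
    Finset.sum_nonneg fun t ht =>
      mul_nonneg (hwpos t ht).le (by linarith [hmin (x t)])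
  have hBA : B ≤ G * (1 + Real.log T) / (2 * H) := le_trans hregret hA
  -- bound on the sum of gradient norms
  have hNle : ∑ t ∈ Finset.Icc 1 T, ‖g t‖ ≤ 2 * β * B := by
    rw [hBdef, Finset.mul_sum]
    apply Finset.sum_le_sum
    intro t ht
    calc ‖g t‖ = ‖g t‖ ^ 2 * (‖g t‖)⁻¹ := by
          rw [sq, mul_assoc, mul_inv_cancel₀ (ne_of_gt (hgpos t ht)), mul_one]
      _ ≤ 2 * β * (f (x t) - f xstar) * (‖g t‖)⁻¹ :=
          mul_le_mul_of_nonneg_right (hgsq t ht) (hwpos t ht).le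
      _ = 2 * β * ((‖g t‖)⁻¹ * (f (x t) - f xstar)) := by ring
  have hNpos : 0 < ∑ t ∈ Finset.Icc 1 T, ‖g t‖ :=
    Finset.sum_pos (fun t ht => hgpos t ht) (Finset.nonempty_Icc.mpr hT)
  -- Cauchy–Schwarz
  set W := ∑ τ ∈ Finset.Icc 1 T, (‖g τ‖)⁻¹ with hWdef
  have hWpos : 0 < W := hSpos T (hmem1T T hT le_rfl)
  have hCS : ((T:ℝ)) ^ 2 ≤ (∑ t ∈ Finset.Icc 1 T, ‖g t‖) * W := by
    have h1 := Finset.sum_mul_sq_le_sq_mul_sq (Finset.Icc 1 T)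
      (fun t => Real.sqrt ‖g t‖) (fun t => Real.sqrt ((‖g t‖)⁻¹))
    have h2 : ∑ t ∈ Finset.Icc 1 T, Real.sqrt ‖g t‖ * Real.sqrt ((‖g t‖)⁻¹) = (T:ℝ) := by
      have e : ∀ t ∈ Finset.Icc 1 T, Real.sqrt ‖g t‖ * Real.sqrt ((‖g t‖)⁻¹) = 1 := by
        intro t ht
        rw [← Real.sqrt_mul (norm_nonneg _), mul_inv_cancel₀ (ne_of_gt (hgpos t ht)),
          Real.sqrt_one]
      rw [Finset.sum_congr rfl e, Finset.sum_const, Nat.card_Icc]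
      simp
    calc ((T:ℝ)) ^ 2
        = (∑ t ∈ Finset.Icc 1 T, Real.sqrt ‖g t‖ * Real.sqrt ((‖g t‖)⁻¹)) ^ 2 := by rw [h2]
      _ ≤ (∑ t ∈ Finset.Icc 1 T, Real.sqrt ‖g t‖ ^ 2)
            * (∑ t ∈ Finset.Icc 1 T, Real.sqrt ((‖g t‖)⁻¹) ^ 2) := h1
      _ = (∑ t ∈ Finset.Icc 1 T, ‖g t‖) * W := by
          rw [hWdef]
          congr 1
          · exact Finset.sum_congr rfl fun t ht => Real.sq_sqrt (norm_nonneg _)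
          · exact Finset.sum_congr rfl fun t ht => Real.sq_sqrt (inv_nonneg.mpr (norm_nonneg _))
  -- Jensen-type bound via convexity at xbar
  have hp_sum : ∑ t ∈ Finset.Icc 1 T, (‖g t‖)⁻¹ / W = 1 := by
    rw [← Finset.sum_div, div_self (ne_of_gt hWpos)]
  have hjensen : f xbar - f xstar ≤ B / W := by
    have hx0 : ∑ t ∈ Finset.Icc 1 T, ((‖g t‖)⁻¹ / W) • (x t - xbar) = 0 := by
      have hsplit : ∑ t ∈ Finset.Icc 1 T, ((‖g t‖)⁻¹ / W) • (x t - xbar)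
          = (∑ t ∈ Finset.Icc 1 T, ((‖g t‖)⁻¹ / W) • x t)
            - (∑ t ∈ Finset.Icc 1 T, (‖g t‖)⁻¹ / W) • xbar := by
        rw [Finset.sum_smul, ← Finset.sum_sub_distrib]
        exact Finset.sum_congr rfl fun t ht => by rw [smul_sub]
      rw [hsplit, hp_sum, one_smul, ← hxbar, sub_self]
    have hinz : ∑ t ∈ Finset.Icc 1 T,
        ((‖g t‖)⁻¹ / W) * (inner ℝ (gradient f xbar) (x t - xbar) : ℝ) = 0 := by
      have hterm : ∀ t, ((‖g t‖)⁻¹ / W) * (inner ℝ (gradient f xbar) (x t - xbar) : ℝ)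
          = (inner ℝ (gradient f xbar) (((‖g t‖)⁻¹ / W) • (x t - xbar)) : ℝ) := fun t =>
        (real_inner_smul_right _ _ _).symm
      rw [Finset.sum_congr rfl fun t _ => hterm t, ← inner_sum, hx0, inner_zero_right]
    have hfle : f xbar ≤ ∑ t ∈ Finset.Icc 1 T, ((‖g t‖)⁻¹ / W) * f (x t) := by
      have h1 : ∀ t ∈ Finset.Icc 1 T,
          ((‖g t‖)⁻¹ / W) * f xbar
            + ((‖g t‖)⁻¹ / W) * (inner ℝ (gradient f xbar) (x t - xbar) : ℝ)
          ≤ ((‖g t‖)⁻¹ / W) * f (x t) := by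
        intro t ht
        have h2 := hsc xbar (x t)
        have hp : (0:ℝ) ≤ (‖g t‖)⁻¹ / W :=
          div_nonneg (inv_nonneg.mpr (norm_nonneg _)) hWpos.le
        have h3 : f xbar + (inner ℝ (gradient f xbar) (x t - xbar) : ℝ) ≤ f (x t) := by
          nlinarith [sq_nonneg ‖xbar - x t‖]
        have h4 := mul_le_mul_of_nonneg_left h3 hp
        nlinarith [h4]
      have h4 := Finset.sum_le_sum h1
      rw [Finset.sum_add_distrib, ← Finset.sum_mul, hp_sum, one_mul, hinz, add_zero] at h4
      exact h4
    have h5 : ∑ t ∈ Finset.Icc 1 T, ((‖g t‖)⁻¹ / W) * f (x t) - f xstar = B / W := by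
      have e1 : B / W = ∑ t ∈ Finset.Icc 1 T,
          (((‖g t‖)⁻¹ / W) * f (x t) - ((‖g t‖)⁻¹ / W) * f xstar) := by
        rw [hBdef, Finset.sum_div]
        exact Finset.sum_congr rfl fun t ht => by ring
      rw [e1, Finset.sum_sub_distrib, ← Finset.sum_mul, hp_sum, one_mul]
    linarith
  -- final arithmetic
  set L := 1 + Real.log T with hL
  have hLpos : (0:ℝ) < L := by
    have h := Real.log_nonneg (by exact_mod_cast hT : (1:ℝ) ≤ (T:ℝ))
    rw [hL]; linarith
  have hTpos : (0:ℝ) < (T:ℝ) := by exact_mod_cast hT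
  have hN2 : ∑ t ∈ Finset.Icc 1 T, ‖g t‖ ≤ β * G * L / H := by
    have h1 : 2 * β * B ≤ 2 * β * (G * L / (2 * H)) :=
      mul_le_mul_of_nonneg_left hBA (by positivity)
    have h2 : 2 * β * (G * L / (2 * H)) = β * G * L / H := by
      field_simp
    linarith [hNle]
  have hWge : H * (T:ℝ) ^ 2 / (β * G * L) ≤ W := by
    rw [div_le_iff₀ (by positivity)]
    have h1 : ((T:ℝ)) ^ 2 ≤ β * G * L / H * W :=
      le_trans hCS (mul_le_mul_of_nonneg_right hN2 hWpos.le)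
    have h2 : H * ((T:ℝ)) ^ 2 ≤ H * (β * G * L / H * W) :=
      mul_le_mul_of_nonneg_left h1 hH.le
    have h3 : H * (β * G * L / H * W) = W * (β * G * L) := by
      field_simp
    exact h2.trans_eq h3
  have hfinal : B / W ≤ β / H * G ^ 2 * L ^ 2 / (H * (T:ℝ) ^ 2) := by
    have hW0pos : (0:ℝ) < H * (T:ℝ) ^ 2 / (β * G * L) := by positivity
    have h1 : B / W ≤ B / (H * (T:ℝ) ^ 2 / (β * G * L)) :=
      div_le_div_of_nonneg_left hBnonneg hW0pos hWge
    have h2 : B / (H * (T:ℝ) ^ 2 / (β * G * L)) = B * (β * G * L) / (H * (T:ℝ) ^ 2) :=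
      div_div_eq_mul_div B _ _
    have h3 : B * (β * G * L) / (H * (T:ℝ) ^ 2)
        ≤ (G * L / (2 * H)) * (β * G * L) / (H * (T:ℝ) ^ 2) := by
      gcongr
    have hnum : (G * L / (2 * H)) * (β * G * L) ≤ β / H * G ^ 2 * L ^ 2 := by
      rw [div_mul_eq_mul_div, div_mul_eq_mul_div, div_mul_eq_mul_div,
        div_le_div_iff₀ (by positivity) (by positivity)]
      nlinarith [mul_pos (mul_pos (mul_pos hβpos (pow_pos hGpos 2)) (pow_pos hLpos 2)) hH]
    have h4 : (G * L / (2 * H)) * (β * G * L) / (H * (T:ℝ) ^ 2)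
        ≤ β / H * G ^ 2 * L ^ 2 / (H * (T:ℝ) ^ 2) := by
      gcongr
    rw [h2] at h1
    exact le_trans h1 (le_trans h3 h4)
  have hxsge := hmin xs
  calc f xbar - f xs ≤ f xbar - f xstar := by linarith
    _ ≤ B / W := hjensen
    _ ≤ _ := hfinal
end
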